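/- arXiv:2411.10235 — 4 statements merged into one kernel-verified Lean document; each statement's English description precedes it below -/
import Mathlib

section
/- Let $p$ be a probability density on $\mathbb{R}^d$ with finite second moment, absolutely continuous with respect to $\gamma_d$ with $r = p/\gamma_d$, and let $V(t,x) = \frac{1}{t}\nabla \log Q_t r(x)$ where $Q_t r(x) = \int r(tx + \sqrt{1-t^2} z)\, d\gamma_d(z)$. Then $\lim_{t \to 0^+} V(t,x) = \int y \, p(y)\, dy$ for every $x \in \mathbb{R}^d$, so the velocity field extends continuously to $t = 0$. -/
open MeasureTheory Real Set Filter Topology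

noncomputable def auxK (d : ℕ) (c : ℝ) (t : ℝ) (x' y : EuclideanSpace ℝ (Fin d)) : ℝ :=
  ((Real.sqrt (1 - t ^ 2)) ^ d)⁻¹ *
    (c * Real.exp (-‖(Real.sqrt (1 - t ^ 2))⁻¹ • (y - t • x')‖ ^ 2 / 2))

variable {d : ℕ}

lemma aux_gauss_deriv (c : ℝ) (u : EuclideanSpace ℝ (Fin d)) :
    HasFDerivAt (fun v : EuclideanSpace ℝ (Fin d) => c * Real.exp (-‖v‖ ^ 2 / 2))
      ((-(c * Real.exp (-‖u‖ ^ 2 / 2))) • innerSL ℝ u) u := by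
  have h1 : HasFDerivAt (fun v : EuclideanSpace ℝ (Fin d) => ‖v‖ ^ 2) (2 • innerSL ℝ u) u :=
    (hasStrictFDerivAt_norm_sq u).hasFDerivAt
  have h2 : HasFDerivAt (fun v : EuclideanSpace ℝ (Fin d) => -‖v‖ ^ 2 / 2)
      ((-(1:ℝ)/2) • (2 • innerSL ℝ u)) u := by
    exact (h1.const_mul (-(1:ℝ)/2)).congr_of_eventuallyEq (Eventually.of_forall fun v => by ring)
  have h3 := (Real.hasDerivAt_exp (-‖u‖ ^ 2 / 2)).comp_hasFDerivAt u h2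
  have h4 := h3.const_mul c
  refine h4.congr_fderiv ?_
  ext w
  simp [smul_smul, ContinuousLinearMap.smul_apply, smul_eq_mul]
  ring

lemma aux_integrand_deriv (c t s : ℝ) (hs : 0 < s) (ry : ℝ) (y x' : EuclideanSpace ℝ (Fin d)) :
    HasFDerivAt
      (fun w : EuclideanSpace ℝ (Fin d) =>
        ry * ((s ^ d)⁻¹ * (c * Real.exp (-‖s⁻¹ • (y - t • w)‖ ^ 2 / 2))))
      ((ry * ((s ^ d)⁻¹ * (c * Real.exp (-‖s⁻¹ • (y - t • x')‖ ^ 2 / 2))) * (t / s ^ 2)) •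
        innerSL ℝ (y - t • x')) x' := by
  set u : EuclideanSpace ℝ (Fin d) := s⁻¹ • (y - t • x') with hu
  have haff : HasFDerivAt (fun w : EuclideanSpace ℝ (Fin d) => s⁻¹ • (y - t • w))
      ((-(s⁻¹ * t)) • ContinuousLinearMap.id ℝ (EuclideanSpace ℝ (Fin d))) x' := by
    have h0 : HasFDerivAt (fun w : EuclideanSpace ℝ (Fin d) => (-(s⁻¹ * t)) • w + s⁻¹ • y)
        ((-(s⁻¹ * t)) • ContinuousLinearMap.id ℝ (EuclideanSpace ℝ (Fin d))) x' :=
      (((-(s⁻¹ * t)) • ContinuousLinearMap.id ℝ (EuclideanSpace ℝ (Fin d))).hasFDerivAt.add_const (s⁻¹ • y))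
    convert h0 using 2 with w
    module
  have hcomp := (aux_gauss_deriv c u).comp x' haff
  have hfin := hcomp.const_mul (ry * (s ^ d)⁻¹)
  refine (hfin.congr_of_eventuallyEq (Eventually.of_forall fun w => ?_)).congr_fderiv ?_
  · simp only [Function.comp_apply]; ring
  · ext w
    simp [ContinuousLinearMap.comp_apply, ContinuousLinearMap.smul_apply, smul_eq_mul, hu,
      real_inner_smul_left]
    field_simp

lemma aux_exp_bound {t s R : ℝ} (ht : 0 < t) (ht2 : t ≤ 1/2) (hs : s = Real.sqrt (1 - t^2))
    {x' y : EuclideanSpace ℝ (Fin d)} (hx : ‖x'‖ ≤ R) :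
    (s ^ d)⁻¹ * Real.exp (-‖s⁻¹ • (y - t • x')‖ ^ 2 / 2)
      ≤ 2 ^ d * (Real.exp (R ^ 2) * Real.exp (-‖y‖ ^ 2 / 2)) := by
  have h1t : (0:ℝ) ≤ 1 - t^2 := by nlinarith
  have hssq : s ^ 2 = 1 - t ^ 2 := by rw [hs, Real.sq_sqrt h1t]
  have hs0 : 0 ≤ s := hs ▸ Real.sqrt_nonneg _
  have hs34 : 3/4 ≤ s ^ 2 := by nlinarith
  have hs12 : (1:ℝ)/2 ≤ s := by nlinarith
  have hspos : 0 < s := by linarith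
  have hR0 : 0 ≤ R := le_trans (norm_nonneg _) hx
  have hp1 : (s ^ d)⁻¹ ≤ 2 ^ d := by
    have h2 : ((2:ℝ)⁻¹) ^ d ≤ s ^ d := pow_le_pow_left₀ (by norm_num) (by linarith) d
    have hsd : (0:ℝ) < s ^ d := pow_pos hspos d
    calc (s ^ d)⁻¹ ≤ (((2:ℝ)⁻¹) ^ d)⁻¹ := by
          apply inv_anti₀ (by positivity) h2
      _ = 2 ^ d := by simp
  have hp2 : Real.exp (-‖s⁻¹ • (y - t • x')‖ ^ 2 / 2)
      ≤ Real.exp (R ^ 2) * Real.exp (-‖y‖ ^ 2 / 2) := by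
    rw [← Real.exp_add, Real.exp_le_exp]
    have hnorm : ‖s⁻¹ • (y - t • x')‖ ^ 2 = (s ^ 2)⁻¹ * ‖y - t • x'‖ ^ 2 := by
      rw [norm_smul, Real.norm_eq_abs, abs_of_nonneg (inv_nonneg.2 hs0)]
      rw [mul_pow, inv_pow]
    have hexpand : ‖y - t • x'‖ ^ 2
        = ‖y‖ ^ 2 - 2 * (t * inner ℝ y x') + t ^ 2 * ‖x'‖ ^ 2 := by
      rw [@norm_sub_sq_real _ _ _ y (t • x'), real_inner_smul_right, norm_smul]
      rw [Real.norm_eq_abs]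
      rw [mul_pow, sq_abs]
    have hinner : (inner ℝ y x' : ℝ) ≤ ‖y‖ * R := by
      calc (inner ℝ y x' : ℝ) ≤ ‖y‖ * ‖x'‖ := real_inner_le_norm y x'
        _ ≤ ‖y‖ * R := by apply mul_le_mul_of_nonneg_left hx (norm_nonneg _)
    set u := ‖y‖ with hu
    have hu0 : 0 ≤ u := norm_nonneg _
    have hD : ‖y - t • x'‖ ^ 2 ≥ u ^ 2 - 2 * t * u * R := by nlinarith
    rw [hnorm]
    have hσinv : (s^2)⁻¹ ≤ 4/3 := by
      rw [inv_le_comm₀ (by positivity) (by norm_num)]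
      linarith
    have hσinv1 : 1 ≤ (s^2)⁻¹ := by
      rw [le_inv_comm₀ (by norm_num) (by positivity)]
      nlinarith
    have hmul : (s^2)⁻¹ * (s^2) = 1 := by field_simp
    nlinarith [sq_nonneg (t * u - R),
      mul_le_mul_of_nonneg_left hD (by positivity : (0:ℝ) ≤ (s^2)⁻¹), sq_nonneg u, sq_nonneg R]
  calc (s ^ d)⁻¹ * Real.exp (-‖s⁻¹ • (y - t • x')‖ ^ 2 / 2)
      ≤ 2 ^ d * (Real.exp (R ^ 2) * Real.exp (-‖y‖ ^ 2 / 2)) := by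
        apply mul_le_mul hp1 hp2 (le_of_lt (Real.exp_pos _)) (by positivity)

lemma aux_cov (f : EuclideanSpace ℝ (Fin d) → ℝ) (a : EuclideanSpace ℝ (Fin d)) {s : ℝ}
    (hs : 0 ≤ s) :
    ∫ z, f (a + s • z) = (s ^ d)⁻¹ • ∫ y, f y := by
  have h1 : ∫ z, f (a + s • z) = ∫ z, (fun w => f (a + w)) (s • z) := rfl
  rw [h1, Measure.integral_comp_smul_of_nonneg (volume) (fun w => f (a + w)) s (hR := hs),
    finrank_euclideanSpace_fin, integral_add_left_eq_self]

lemma aux_K_tendsto (c : ℝ) (x y : EuclideanSpace ℝ (Fin d)) :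
    Tendsto (fun t : ℝ => auxK d c t x y)
      (𝓝[>] (0:ℝ)) (𝓝 (c * Real.exp (-‖y‖ ^ 2 / 2))) := by
  unfold auxK
  have hs : Tendsto (fun t : ℝ => Real.sqrt (1 - t ^ 2)) (𝓝 0) (𝓝 1) := by
    have hc : Continuous fun t : ℝ => Real.sqrt (1 - t ^ 2) := by continuity
    have := hc.tendsto 0
    simpa using this
  have hvec : Tendsto (fun t : ℝ => (Real.sqrt (1 - t ^ 2))⁻¹ • (y - t • x)) (𝓝 0) (𝓝 y) := by
    have h1 : Tendsto (fun t : ℝ => y - t • x) (𝓝 0) (𝓝 y) := by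
      have : Continuous fun t : ℝ => y - t • x :=
        continuous_const.sub (continuous_id.smul continuous_const)
      have := this.tendsto 0
      simpa using this
    have := (hs.inv₀ one_ne_zero).smul h1
    simpa using this
  have hg : Continuous fun v : EuclideanSpace ℝ (Fin d) => c * Real.exp (-‖v‖ ^ 2 / 2) := by
    continuity
  have h2 : Tendsto
      (fun t : ℝ => c * Real.exp (-‖(Real.sqrt (1 - t ^ 2))⁻¹ • (y - t • x)‖ ^ 2 / 2))
      (𝓝 0) (𝓝 (c * Real.exp (-‖y‖ ^ 2 / 2))) := (hg.tendsto y).comp hvec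
  have h3 : Tendsto (fun t : ℝ => ((Real.sqrt (1 - t ^ 2)) ^ d)⁻¹) (𝓝 0) (𝓝 1) := by
    have := (hs.pow d).inv₀ (by simp)
    simpa using this
  have := h3.mul h2
  rw [one_mul] at this
  exact this.mono_left nhdsWithin_le_nhds

set_option maxHeartbeats 4000000 in
/-- the velocity field `V(t,x) = (1/t) ∇ log Q_t r (x)` tends to the
mean of `p` as `t → 0⁺`. -/
theorem stmt_1 (d : ℕ) (r : EuclideanSpace ℝ (Fin d) → ℝ)
    (hr_meas : Measurable r) (hr_nonneg : ∀ y, 0 ≤ r y)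
    (γd : EuclideanSpace ℝ (Fin d) → ℝ)
    (hγd : ∀ y, γd y = (2 * π) ^ (-(d : ℝ) / 2) * Real.exp (-‖y‖ ^ 2 / 2))
    (hprob : ∫ y, r y * γd y = 1)
    (hmom : Integrable (fun y => ‖y‖ ^ 2 * (r y * γd y)))
    (Q : ℝ → EuclideanSpace ℝ (Fin d) → ℝ)
    (hQ : ∀ t x, Q t x = ∫ z, r (t • x + Real.sqrt (1 - t ^ 2) • z) * γd z)
    (hQpos : ∀ t ∈ Ico (0 : ℝ) 1, ∀ x, 0 < Q t x)
    (x : EuclideanSpace ℝ (Fin d)) :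
    Tendsto (fun t : ℝ => (1 / t) • gradient (fun z => Real.log (Q t z)) x)
      (𝓝[>] 0) (𝓝 (∫ y, (r y * γd y) • y)) := by
  classical
  set c : ℝ := (2 * π) ^ (-(d : ℝ) / 2) with hcdef
  set g : EuclideanSpace ℝ (Fin d) → ℝ := fun y => c * Real.exp (-‖y‖ ^ 2 / 2) with hgdef
  have hγg : γd = g := funext fun y => by rw [hγd y]
  subst hγg
  have hcpos : 0 < c := by rw [hcdef]; positivity
  have hgpos : ∀ y, 0 < g y := fun y => by simp only [hgdef]; positivity
  have hgcont : Continuous g := by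
    simp only [hgdef]
    continuity
  have hgmeas : Measurable g := hgcont.measurable
  have hpmeas : Measurable fun y => r y * g y := hr_meas.mul hgmeas
  have hp_int : Integrable (fun y => r y * g y) := by
    by_contra h; rw [integral_undef h] at hprob; norm_num at hprob
  have hp_nonneg : ∀ y, 0 ≤ r y * g y := fun y => mul_nonneg (hr_nonneg y) (hgpos y).le
  have hmom1 : Integrable (fun y => (1 + ‖y‖) * (r y * g y)) := by
    apply Integrable.mono' ((hp_int.const_mul 2).add hmom)
    · exact ((measurable_const.add measurable_norm).mul hpmeas).aestronglyMeasurable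
    · filter_upwards with y
      simp only [Pi.add_apply]
      have h1 : ‖y‖ ≤ 1 + ‖y‖ ^ 2 := by nlinarith [norm_nonneg y, sq_nonneg (‖y‖ - 1)]
      have h2 := hp_nonneg y
      have h3 : (0:ℝ) ≤ (1 + ‖y‖) * (r y * g y) := by positivity
      rw [Real.norm_eq_abs, abs_of_nonneg h3]
      nlinarith [norm_nonneg y]
  have hmean_int : Integrable (fun y => (r y * g y) • y) := by
    apply Integrable.mono' hmom1
    · exact (hpmeas.smul measurable_id).aestronglyMeasurable
    · filter_upwards with y
      rw [norm_smul, Real.norm_eq_abs, abs_of_nonneg (hp_nonneg y)]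
      nlinarith [norm_nonneg y, hp_nonneg y]
  set R : ℝ := ‖x‖ + 1 with hRdef
  have hR0 : (0:ℝ) ≤ R := by positivity
  set B : ℝ := 2 ^ d * Real.exp (R ^ 2) with hBdef
  have hB0 : (0:ℝ) < B := by rw [hBdef]; positivity
  -- uniform kernel bound
  have hKb : ∀ t ∈ Ioc (0:ℝ) (1/2), ∀ x' ∈ Metric.ball x 1, ∀ y,
      r y * auxK d c t x' y ≤ B * (r y * g y) := by
    intro t ht x' hx' y
    have hxR : ‖x'‖ ≤ R := by
      have h1 : ‖x' - x‖ < 1 := mem_ball_iff_norm.mp hx'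
      calc ‖x'‖ = ‖x + (x' - x)‖ := by rw [add_sub_cancel]
        _ ≤ ‖x‖ + ‖x' - x‖ := norm_add_le _ _
        _ ≤ R := by rw [hRdef]; linarith
    have h1 := aux_exp_bound (d := d) ht.1 ht.2 rfl hxR (y := y)
    have h2 : auxK d c t x' y ≤ B * g y := by
      simp only [auxK, hgdef, hBdef]
      nlinarith [mul_le_mul_of_nonneg_left h1 hcpos.le]
    nlinarith [mul_le_mul_of_nonneg_left h2 (hr_nonneg y)]
  have hsfact : ∀ t ∈ Ioc (0:ℝ) (1/2),
      0 < Real.sqrt (1 - t ^ 2) ∧ (Real.sqrt (1 - t ^ 2)) ^ 2 = 1 - t ^ 2 := by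
    intro t ht
    have h1 : (0:ℝ) < 1 - t ^ 2 := by nlinarith [ht.1, ht.2]
    exact ⟨Real.sqrt_pos.mpr h1, Real.sq_sqrt h1.le⟩
  have hKpos : ∀ t ∈ Ioc (0:ℝ) (1/2), ∀ x' y, 0 < auxK d c t x' y := by
    intro t ht x' y
    have := (hsfact t ht).1
    simp only [auxK]
    positivity
  have hKcont : ∀ (t : ℝ) (x' : EuclideanSpace ℝ (Fin d)),
      Continuous (fun y => auxK d c t x' y) := by
    intro t x'
    simp only [auxK]
    have h1 : Continuous fun y : EuclideanSpace ℝ (Fin d) =>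
        (Real.sqrt (1 - t ^ 2))⁻¹ • (y - t • x') :=
      by fun_prop
    exact continuous_const.mul (continuous_const.mul
      (Real.continuous_exp.comp ((h1.norm.pow 2).neg.div_const 2)))
  have hKmeas : ∀ (t : ℝ) (x' : EuclideanSpace ℝ (Fin d)),
      AEStronglyMeasurable (fun y => r y * auxK d c t x' y) volume :=
    fun t x' => (hr_meas.mul (hKcont t x').measurable).aestronglyMeasurable
  have hxball : x ∈ Metric.ball x 1 := Metric.mem_ball_self one_pos
  -- pointwise bound used for integrable/DCT (scalar form)
  have hKnormb : ∀ t ∈ Ioc (0:ℝ) (1/2), ∀ x' ∈ Metric.ball x 1, ∀ y,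
      ‖r y * auxK d c t x' y‖ ≤ B * ((1 + ‖y‖) * (r y * g y)) := by
    intro t ht x' hx' y
    have h1 := hKb t ht x' hx' y
    have h3 : 0 ≤ r y * auxK d c t x' y :=
      mul_nonneg (hr_nonneg y) (hKpos t ht x' y).le
    rw [Real.norm_eq_abs, abs_of_nonneg h3]
    nlinarith [norm_nonneg y, hp_nonneg y, mul_nonneg (mul_nonneg hB0.le (hp_nonneg y)) (norm_nonneg y)]
  have hKint : ∀ t ∈ Ioc (0:ℝ) (1/2), ∀ x' ∈ Metric.ball x 1,
      Integrable (fun y => r y * auxK d c t x' y) := by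
    intro t ht x' hx'
    apply Integrable.mono' (hmom1.const_mul B) (hKmeas t x')
    filter_upwards with y using hKnormb t ht x' hx' y
  have hKyint : ∀ t ∈ Ioc (0:ℝ) (1/2),
      Integrable (fun y => (r y * auxK d c t x y) • y) := by
    intro t ht
    apply Integrable.mono' (hmom1.const_mul B)
    · exact ((hr_meas.mul (hKcont t x).measurable).aestronglyMeasurable).smul
        aestronglyMeasurable_id
    · filter_upwards with y
      rw [norm_smul]
      have h1 := hKnormb t ht x hxball y
      have h2 : (0:ℝ) ≤ ‖r y * auxK d c t x y‖ := norm_nonneg _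
      have h4 := hKb t ht x hxball y
      have h3 : 0 ≤ r y * auxK d c t x y := mul_nonneg (hr_nonneg y) (hKpos t ht x y).le
      rw [Real.norm_eq_abs, abs_of_nonneg h3]
      nlinarith [norm_nonneg y, hp_nonneg y, mul_nonneg (mul_nonneg hB0.le (hp_nonneg y)) (norm_nonneg y),
        mul_le_mul_of_nonneg_right h4 (norm_nonneg y)]
  -- change of variables
  have hQrw : ∀ t ∈ Ioc (0:ℝ) (1/2), ∀ x', Q t x' = ∫ y, r y * auxK d c t x' y := by
    intro t ht x'
    obtain ⟨hspos, hssq⟩ := hsfact t ht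
    rw [hQ t x']
    have hfeq : ∀ z : EuclideanSpace ℝ (Fin d), r (t • x' + Real.sqrt (1 - t ^ 2) • z) * g z
        = (fun w => r w * (c * Real.exp
            (-‖(Real.sqrt (1 - t ^ 2))⁻¹ • (w - t • x')‖ ^ 2 / 2)))
          (t • x' + Real.sqrt (1 - t ^ 2) • z) := by
      intro z
      have hz : (Real.sqrt (1 - t ^ 2))⁻¹ • (t • x' + Real.sqrt (1 - t ^ 2) • z - t • x') = z := by
        rw [add_sub_cancel_left, smul_smul, inv_mul_cancel₀ hspos.ne', one_smul]
      simp only [hgdef, hz]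
    calc (∫ z, r (t • x' + Real.sqrt (1 - t ^ 2) • z) * g z)
        = ∫ z, (fun w => r w * (c * Real.exp
            (-‖(Real.sqrt (1 - t ^ 2))⁻¹ • (w - t • x')‖ ^ 2 / 2)))
            (t • x' + Real.sqrt (1 - t ^ 2) • z) :=
          integral_congr_ae (Filter.Eventually.of_forall hfeq)
      _ = ((Real.sqrt (1 - t ^ 2)) ^ d)⁻¹ • ∫ y, (fun w => r w * (c * Real.exp
            (-‖(Real.sqrt (1 - t ^ 2))⁻¹ • (w - t • x')‖ ^ 2 / 2))) y :=
          aux_cov (f := fun w => r w * (c * Real.exp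
            (-‖(Real.sqrt (1 - t ^ 2))⁻¹ • (w - t • x')‖ ^ 2 / 2))) (t • x') hspos.le
      _ = ∫ y, r y * auxK d c t x' y := by
          rw [← integral_smul]
          congr 1
          funext y
          simp only [auxK, smul_eq_mul]
          ring
  have hKynormb : ∀ t ∈ Ioc (0:ℝ) (1/2), ∀ y,
      ‖(r y * auxK d c t x y) • y‖ ≤ B * ((1 + ‖y‖) * (r y * g y)) := by
    intro t ht y
    rw [norm_smul]
    have h4 := hKb t ht x hxball y
    have h3 : 0 ≤ r y * auxK d c t x y := mul_nonneg (hr_nonneg y) (hKpos t ht x y).le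
    rw [Real.norm_eq_abs, abs_of_nonneg h3]
    nlinarith [norm_nonneg y, hp_nonneg y,
      mul_nonneg (mul_nonneg hB0.le (hp_nonneg y)) (norm_nonneg y),
      mul_le_mul_of_nonneg_right h4 (norm_nonneg y)]
  have hKymeas : ∀ t : ℝ, AEStronglyMeasurable (fun y => (r y * auxK d c t x y) • y) volume :=
    fun t => ((hr_meas.mul (hKcont t x).measurable).smul measurable_id).aestronglyMeasurable
  have hKyint : ∀ t ∈ Ioc (0:ℝ) (1/2),
      Integrable (fun y => (r y * auxK d c t x y) • y) := by
    intro t ht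
    apply Integrable.mono' (hmom1.const_mul B) (hKymeas t)
    filter_upwards with y using hKynormb t ht y
  -- main per-t identity
  have hmain : ∀ t ∈ Ioc (0:ℝ) (1/2),
      (1 / t) • gradient (fun z => Real.log (Q t z)) x
        = ((Q t x)⁻¹ * (1 - t ^ 2)⁻¹) • (∫ y, (r y * auxK d c t x y) • y)
          - ((1 - t ^ 2)⁻¹ * t) • x := by
    intro t ht
    obtain ⟨hspos, hssq⟩ := hsfact t ht
    have hQtpos : 0 < Q t x := hQpos t ⟨ht.1.le, by linarith [ht.2]⟩ x
    have h1t : (0:ℝ) < 1 - t ^ 2 := by nlinarith [ht.1, ht.2]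
    set W : EuclideanSpace ℝ (Fin d) :=
      ∫ y, ((r y * auxK d c t x y) * (t / (1 - t ^ 2))) • (y - t • x) with hWdef
    set F' : EuclideanSpace ℝ (Fin d) → EuclideanSpace ℝ (Fin d) →
        (EuclideanSpace ℝ (Fin d) →L[ℝ] ℝ) :=
      fun x' y => ((r y * auxK d c t x' y) * (t / (1 - t ^ 2))) • innerSL ℝ (y - t • x')
      with hF'def
    have htfrac0 : 0 ≤ t / (1 - t ^ 2) := div_nonneg ht.1.le h1t.le
    have hF'norm : ∀ x' y,
        ‖F' x' y‖ = (r y * auxK d c t x' y) * (t / (1 - t ^ 2)) * ‖y - t • x'‖ := by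
      intro x' y
      have h3 : 0 ≤ (r y * auxK d c t x' y) * (t / (1 - t ^ 2)) :=
        mul_nonneg (mul_nonneg (hr_nonneg y) (hKpos t ht x' y).le) htfrac0
      simp only [hF'def]
      have h : (r y * auxK d c t x' y * (t / (1 - t ^ 2))) • innerSL ℝ (y - t • x')
          = innerSL ℝ ((r y * auxK d c t x' y * (t / (1 - t ^ 2))) • (y - t • x')) := by
        rw [map_smulₛₗ]; simp [starRingEnd_apply]
      rw [h, innerSL_apply_norm, norm_smul, Real.norm_eq_abs, abs_of_nonneg h3]
    have hF'bound : ∀ y : EuclideanSpace ℝ (Fin d), ∀ x' ∈ Metric.ball x 1,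
        ‖F' x' y‖ ≤ (B * (R + 1)) * ((1 + ‖y‖) * (r y * g y)) := by
      intro y x' hx'
      rw [hF'norm]
      have h1 := hKb t ht x' hx' y
      have htfrac : t / (1 - t ^ 2) ≤ 1 := by
        rw [div_le_one h1t]; nlinarith [ht.1, ht.2]
      have hxR : ‖x'‖ ≤ R := by
        have h2 : ‖x' - x‖ < 1 := mem_ball_iff_norm.mp hx'
        calc ‖x'‖ = ‖x + (x' - x)‖ := by rw [add_sub_cancel]
          _ ≤ ‖x‖ + ‖x' - x‖ := norm_add_le _ _
          _ ≤ R := by rw [hRdef]; linarith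
      have hyb : ‖y - t • x'‖ ≤ ‖y‖ + R := by
        calc ‖y - t • x'‖ ≤ ‖y‖ + ‖t • x'‖ := norm_sub_le _ _
          _ = ‖y‖ + t * ‖x'‖ := by
              rw [norm_smul, Real.norm_eq_abs, abs_of_nonneg ht.1.le]
          _ ≤ ‖y‖ + R := by nlinarith [ht.1, ht.2, norm_nonneg x']
      have hK0 : 0 ≤ r y * auxK d c t x' y :=
        mul_nonneg (hr_nonneg y) (hKpos t ht x' y).le
      have hyn : (0:ℝ) ≤ ‖y - t • x'‖ := norm_nonneg _
      have hp := hp_nonneg y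
      have hyy : (0:ℝ) ≤ ‖y‖ := norm_nonneg y
      nlinarith [mul_le_mul_of_nonneg_right
          (mul_le_mul h1 htfrac htfrac0 (mul_nonneg hB0.le hp)) hyn,
        mul_le_mul_of_nonneg_left hyb (mul_nonneg hB0.le hp),
        mul_nonneg (mul_nonneg (mul_nonneg hB0.le hp) hR0) hyy,
        mul_nonneg (mul_nonneg hB0.le hp) hyy]
    have hWintgd : Integrable
        (fun y => ((r y * auxK d c t x y) * (t / (1 - t ^ 2))) • (y - t • x)) := by
      apply Integrable.mono' (hmom1.const_mul (B * (R + 1)))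
      · exact (((hr_meas.mul (hKcont t x).measurable).mul_const _).smul
          (measurable_id.sub measurable_const)).aestronglyMeasurable
      · filter_upwards with y
        have h := hF'bound y x hxball
        rw [hF'norm] at h
        have h3 : 0 ≤ (r y * auxK d c t x y) * (t / (1 - t ^ 2)) :=
          mul_nonneg (mul_nonneg (hr_nonneg y) (hKpos t ht x y).le) htfrac0
        rw [norm_smul, Real.norm_eq_abs, abs_of_nonneg h3]
        exact h
    have hF'int : Integrable (F' x) := by
      apply Integrable.mono' (hmom1.const_mul (B * (R + 1)))
      · apply AEStronglyMeasurable.fun_smul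
        · exact ((hr_meas.mul (hKcont t x).measurable).mul_const _).aestronglyMeasurable
        · exact ((innerSL ℝ).continuous.comp
            (continuous_id.sub continuous_const)).aestronglyMeasurable
      · filter_upwards with y using hF'bound y x hxball
    have hderiv : ∀ᵐ y ∂(volume : Measure (EuclideanSpace ℝ (Fin d))),
        ∀ x' ∈ Metric.ball x 1,
          HasFDerivAt (fun w => r y * auxK d c t w y) (F' x' y) x' := by
      refine Eventually.of_forall fun y x' _ => ?_
      have h := aux_integrand_deriv c t (Real.sqrt (1 - t ^ 2)) hspos (r y) y x'
      rw [hssq] at h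
      simp only [hF'def, auxK]
      exact h
    have hfd := hasFDerivAt_integral_of_dominated_of_fderiv_le
      (F := fun x' y => r y * auxK d c t x' y) (F' := F')
      (bound := fun y => (B * (R + 1)) * ((1 + ‖y‖) * (r y * g y)))
      (Metric.ball_mem_nhds x one_pos) (Eventually.of_forall fun x' => hKmeas t x') (hKint t ht x hxball)
      hF'int.aestronglyMeasurable
      (Eventually.of_forall fun y x' hx' => hF'bound y x' hx')
      (hmom1.const_mul (B * (R + 1))) hderiv
    have hfunext : (fun x' => ∫ y, r y * auxK d c t x' y) = Q t :=
      funext fun x' => (hQrw t ht x').symm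
    rw [hfunext] at hfd
    have hCLMeq : (∫ y, F' x y)
        = (InnerProductSpace.toDual ℝ (EuclideanSpace ℝ (Fin d))) W := by
      ext w
      rw [ContinuousLinearMap.integral_apply hF'int, InnerProductSpace.toDual_apply_apply]
      calc (∫ y, (F' x y) w)
          = ∫ y, (inner ℝ w (((r y * auxK d c t x y) * (t / (1 - t ^ 2))) • (y - t • x)) : ℝ) := by
            congr 1
            funext y
            simp only [hF'def, ContinuousLinearMap.smul_apply, innerSL_apply_apply, smul_eq_mul]
            rw [real_inner_smul_right, real_inner_comm]
        _ = inner ℝ w W := integral_inner hWintgd w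
        _ = inner ℝ W w := real_inner_comm _ _
    have hgradQ : HasGradientAt (Q t) W x :=
      hasGradientAt_iff_hasFDerivAt.mpr (hCLMeq ▸ hfd)
    have hlogfd : HasFDerivAt (fun z => Real.log (Q t z))
        ((Q t x)⁻¹ • (InnerProductSpace.toDual ℝ (EuclideanSpace ℝ (Fin d)) W)) x :=
      (Real.hasDerivAt_log hQtpos.ne').comp_hasFDerivAt x hgradQ.hasFDerivAt
    have heq2 : (Q t x)⁻¹ • (InnerProductSpace.toDual ℝ (EuclideanSpace ℝ (Fin d)) W)
        = InnerProductSpace.toDual ℝ (EuclideanSpace ℝ (Fin d)) ((Q t x)⁻¹ • W) := by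
      rw [map_smulₛₗ]
      simp [starRingEnd_apply]
    have hgradlog : HasGradientAt (fun z => Real.log (Q t z)) ((Q t x)⁻¹ • W) x :=
      hasGradientAt_iff_hasFDerivAt.mpr (by rw [← heq2]; exact hlogfd)
    rw [hgradlog.gradient]
    have hWsplit : W = (t / (1 - t ^ 2)) •
        ((∫ y, (r y * auxK d c t x y) • y) - (Q t x) • (t • x)) := by
      rw [hWdef]
      have h1 : ∀ y : EuclideanSpace ℝ (Fin d),
          ((r y * auxK d c t x y) * (t / (1 - t ^ 2))) • (y - t • x)
          = (t / (1 - t ^ 2)) •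
              ((r y * auxK d c t x y) • y - (r y * auxK d c t x y) • (t • x)) := by
        intro y
        module
      rw [integral_congr_ae (Filter.Eventually.of_forall h1), integral_smul,
        integral_sub (hKyint t ht) ((hKint t ht x hxball).smul_const (t • x)),
        integral_smul_const, ← hQrw t ht x]
    rw [hWsplit]
    have ht0 : t ≠ 0 := ht.1.ne'
    have hQ0 : Q t x ≠ 0 := hQtpos.ne'
    have h1t0 : (1 - t ^ 2) ≠ 0 := h1t.ne'
    simp only [smul_sub, smul_smul]
    congr 1
    · congr 1
      field_simp
    · congr 1
      field_simp
  -- final limit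
  have hIocmem : Ioc (0:ℝ) (1/2) ∈ 𝓝[>] (0:ℝ) := Ioc_mem_nhdsGT (by norm_num)
  have hQtend : Tendsto (fun t => Q t x) (𝓝[>] (0:ℝ)) (𝓝 1) := by
    have hDCT : Tendsto (fun t => ∫ y, r y * auxK d c t x y) (𝓝[>] (0:ℝ))
        (𝓝 (∫ y, r y * g y)) := by
      apply tendsto_integral_filter_of_dominated_convergence
        (bound := fun y => B * ((1 + ‖y‖) * (r y * g y)))
      · exact Eventually.of_forall fun t => hKmeas t x
      · filter_upwards [hIocmem] with t ht
        filter_upwards with y using hKnormb t ht x hxball y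
      · exact hmom1.const_mul B
      · refine Eventually.of_forall fun y => ?_
        have h := (aux_K_tendsto c x y).const_mul (r y)
        simpa [hgdef] using h
    rw [hprob] at hDCT
    apply Filter.Tendsto.congr' ?_ hDCT
    filter_upwards [hIocmem] with t ht using (hQrw t ht x).symm
  have hAtend : Tendsto (fun t => ∫ y, (r y * auxK d c t x y) • y) (𝓝[>] (0:ℝ))
      (𝓝 (∫ y, (r y * g y) • y)) := by
    apply tendsto_integral_filter_of_dominated_convergence
      (bound := fun y => B * ((1 + ‖y‖) * (r y * g y)))
    · exact Eventually.of_forall fun t => hKymeas t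
    · filter_upwards [hIocmem] with t ht
      filter_upwards with y using hKynormb t ht y
    · exact hmom1.const_mul B
    · refine Eventually.of_forall fun y => ?_
      have h := ((aux_K_tendsto c x y).const_mul (r y)).smul_const y
      simpa [hgdef] using h
  have hstend : Tendsto (fun t : ℝ => (1 - t ^ 2)⁻¹) (𝓝[>] (0:ℝ)) (𝓝 1) := by
    have hcont : Continuous fun t : ℝ => 1 - t ^ 2 := by continuity
    have h := (hcont.tendsto 0).inv₀ (by norm_num)
    have h2 : ((1:ℝ) - 0 ^ 2)⁻¹ = 1 := by norm_num
    rw [h2] at h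
    exact h.mono_left nhdsWithin_le_nhds
  have httend : Tendsto (fun t : ℝ => t) (𝓝[>] (0:ℝ)) (𝓝 0) := by
    have h : Tendsto (fun t : ℝ => t) (𝓝 (0:ℝ)) (𝓝 0) := tendsto_id
    exact h.mono_left nhdsWithin_le_nhds
  have hfinal : Tendsto (fun t : ℝ =>
      ((Q t x)⁻¹ * (1 - t ^ 2)⁻¹) • (∫ y, (r y * auxK d c t x y) • y)
        - ((1 - t ^ 2)⁻¹ * t) • x) (𝓝[>] (0:ℝ)) (𝓝 (∫ y, (r y * g y) • y)) := by
    have h1 := ((hQtend.inv₀ one_ne_zero).mul hstend).smul hAtend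
    have h2 := (hstend.mul httend).smul_const x
    have h3 := h1.sub h2
    simpa using h3
  apply Filter.Tendsto.congr' ?_ hfinal
  filter_upwards [hIocmem] with t ht using (hmain t ht).symm
end

section
/- Let $\mu, \nu$ be probability measures on $\mathbb{R}^d$ and let $\mu_k, \nu_k$ be sequences of probability measures converging in distribution to $\mu$ and $\nu$ respectively, with the supports of $\mu$ and of each $\mu_k$ open. Suppose there exist maps $T_k : \mathbb{R}^d \to \mathbb{R}^d$ with $(T_k)_\# \mu_k = \nu_k$ and each $T_k$ Lipschitz with constant at most $C$. Then there exists a map $T : \mathbb{R}^d \to \mathbb{R}^d$, Lipschitz with constant at most $C$, such that $T_\# \mu = \nu$. -/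
open MeasureTheory Filter Topology Metric Set
open scoped ENNReal NNReal

/-- The topological support of a measure: points all of whose open neighbourhoods
have positive measure. -/
def measSupport {α : Type*} [TopologicalSpace α] [MeasurableSpace α]
    (μ : MeasureTheory.Measure α) : Set α :=
  {x | ∀ U : Set α, IsOpen U → x ∈ U → μ U ≠ 0}

abbrev Euc (d : ℕ) : Type := EuclideanSpace ℝ (Fin d)

lemma aux_tight_single {d : ℕ} (p : ProbabilityMeasure (Euc d)) :
    Tendsto (fun n : ℕ => (p : Measure (Euc d)) (closedBall 0 n)ᶜ) atTop (𝓝 0) := by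
  have hempty : ⋂ n : ℕ, (closedBall (0:(Euc d)) n)ᶜ = ∅ := by
    ext x
    simp only [mem_iInter, mem_compl_iff, mem_closedBall, dist_zero_right, mem_empty_iff_false,
      iff_false, not_forall, not_not]
    obtain ⟨n, hn⟩ := exists_nat_ge ‖x‖
    exact ⟨n, hn⟩
  have h := tendsto_measure_iInter_atTop (μ := (p : Measure (Euc d)))
    (s := fun n : ℕ => (closedBall (0:(Euc d)) n)ᶜ)
    (fun n => measurableSet_closedBall.compl.nullMeasurableSet)
    (fun m n hmn => compl_subset_compl.2 (closedBall_subset_closedBall (Nat.cast_le.2 hmn)))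
    ⟨0, measure_ne_top _ _⟩
  rw [hempty, measure_empty] at h
  exact h

lemma aux_tight_seq {d : ℕ} {p : ProbabilityMeasure (Euc d)} {ps : ℕ → ProbabilityMeasure (Euc d)}
    (h : Tendsto ps atTop (𝓝 p)) {ε : ℝ≥0∞} (hε : 0 < ε) :
    ∃ R : ℝ, 0 < R ∧ ∀ k, ((ps k : Measure (Euc d)) (closedBall (0:(Euc d)) R)ᶜ) < ε := by
  obtain ⟨n₀, hn₀⟩ := ((aux_tight_single p).eventually_lt_const hε).exists
  have hFclosed : IsClosed ((ball (0:(Euc d)) (n₀+1))ᶜ) := isOpen_ball.isClosed_compl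
  have hFsub : ((ball (0:(Euc d)) (n₀+1))ᶜ) ⊆ (closedBall (0:(Euc d)) n₀)ᶜ :=
    compl_subset_compl.2 fun x hx => mem_ball.2 (lt_of_le_of_lt (mem_closedBall.1 hx) (lt_add_one _))
  have hpF : (p : Measure (Euc d)) ((ball (0:(Euc d)) (n₀+1))ᶜ) < ε :=
    lt_of_le_of_lt (measure_mono hFsub) hn₀
  have hlimsup := ProbabilityMeasure.limsup_measure_closed_le_of_tendsto h hFclosed
  have hev : ∀ᶠ k in atTop, (ps k : Measure (Euc d)) ((ball (0:(Euc d)) (n₀+1))ᶜ) < ε :=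
    eventually_lt_of_limsup_lt (lt_of_le_of_lt hlimsup hpF)
  obtain ⟨N, hN⟩ := eventually_atTop.1 hev
  choose g hg using fun k : ℕ => ((aux_tight_single (ps k)).eventually_lt_const hε).exists
  refine ⟨max ((n₀:ℝ)+1) (((Finset.range N).sup g : ℕ) : ℝ), by positivity, fun k => ?_⟩
  rcases lt_or_ge k N with hk | hk
  · refine lt_of_le_of_lt (measure_mono (compl_subset_compl.2
      (closedBall_subset_closedBall ?_))) (hg k)
    exact le_trans (Nat.cast_le.2 (Finset.le_sup (Finset.mem_range.2 hk))) (le_max_right _ _)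
  · refine lt_of_le_of_lt (measure_mono (compl_subset_compl.2 ?_)) (hN k hk)
    exact subset_trans ball_subset_closedBall (closedBall_subset_closedBall (le_max_left _ _))

lemma aux_full_support {d : ℕ} {p : ProbabilityMeasure (Euc d)}
    (h : IsOpen (measSupport (p : Measure (Euc d)))) (x : (Euc d)) :
    x ∈ measSupport (p : Measure (Euc d)) := by
  set m : Measure (Euc d) := (p : Measure (Euc d))
  have hclosed : IsClosed (measSupport m) := by
    rw [← isOpen_compl_iff, isOpen_iff_mem_nhds]
    intro y hy
    simp only [measSupport, mem_compl_iff, mem_setOf_eq, not_forall, not_not] at hy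
    obtain ⟨U, hU, hyU, hU0⟩ := hy
    refine Filter.mem_of_superset (hU.mem_nhds hyU) fun z hz => ?_
    simp only [measSupport, mem_compl_iff, mem_setOf_eq, not_forall, not_not]
    exact ⟨U, hU, hz, hU0⟩
  have hne : (measSupport m).Nonempty := by
    by_contra hemp
    rw [not_nonempty_iff_eq_empty] at hemp
    set S : Set (Set (Euc d)) := {U | IsOpen U ∧ m U = 0} with hS
    have hcover : ⋃₀ S = univ := by
      apply eq_univ_of_forall
      intro y
      have : y ∉ measSupport m := by rw [hemp]; exact notMem_empty y
      simp only [measSupport, mem_setOf_eq, not_forall, not_not] at this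
      obtain ⟨U, hU, hyU, hU0⟩ := this
      exact ⟨U, ⟨hU, hU0⟩, hyU⟩
    obtain ⟨Tc, hTc, hTS, hTU⟩ := TopologicalSpace.isOpen_sUnion_countable S fun s hs => hs.1
    have : m univ = 0 := by
      rw [← hcover, ← hTU]
      exact (measure_sUnion_null_iff hTc).2 fun s hs => (hTS hs).2
    simp [m, measure_univ] at this
  have := (IsClopen.eq_univ ⟨hclosed, h⟩ hne : measSupport m = univ)
  rw [this]; trivial


lemma aux_lip_toReal : LipschitzWith 1 (fun a : ℝ≥0 => (a : ℝ)) :=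
  LipschitzWith.of_dist_le_mul fun a b => by
    rw [NNReal.dist_eq, Real.dist_eq]; simp

/-- stability of Lipschitz transport maps under weak convergence. -/
theorem stmt_2 (d : ℕ) (C : NNReal) (hC : 0 < C)
    (μ ν : ProbabilityMeasure (EuclideanSpace ℝ (Fin d)))
    (μk νk : ℕ → ProbabilityMeasure (EuclideanSpace ℝ (Fin d)))
    (hμ : Tendsto μk atTop (𝓝 μ))
    (hν : Tendsto νk atTop (𝓝 ν))
    (hsuppμ : IsOpen (measSupport (μ : Measure (EuclideanSpace ℝ (Fin d)))))
    (hsuppμk : ∀ k, IsOpen (measSupport (μk k : Measure (EuclideanSpace ℝ (Fin d)))))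
    (T : ℕ → EuclideanSpace ℝ (Fin d) → EuclideanSpace ℝ (Fin d))
    (hTLip : ∀ k, LipschitzWith C (T k))
    (hTpush : ∀ k, Measure.map (T k) (μk k : Measure (EuclideanSpace ℝ (Fin d)))
      = (νk k : Measure (EuclideanSpace ℝ (Fin d)))) :
    ∃ Tlim : EuclideanSpace ℝ (Fin d) → EuclideanSpace ℝ (Fin d),
      LipschitzWith C Tlim ∧
      Measure.map Tlim (μ : Measure (EuclideanSpace ℝ (Fin d)))
        = (ν : Measure (EuclideanSpace ℝ (Fin d))) := by
  set U : Ultrafilter ℕ := Ultrafilter.of atTop with hUdef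
  have hU : (U : Filter ℕ) ≤ atTop := Ultrafilter.of_le _
  -- pointwise boundedness
  have hbd : ∀ x : (Euc d), ∃ M : ℝ, ∀ᶠ k in atTop, T k x ∈ closedBall (0:(Euc d)) M := by
    intro x
    have hm : 0 < (μ : Measure (Euc d)) (ball x 1) := by
      rcases (eq_or_ne ((μ : Measure (Euc d)) (ball x 1)) 0) with h0 | h0
      · exact absurd h0 (aux_full_support hsuppμ x _ isOpen_ball (mem_ball_self one_pos))
      · exact pos_iff_ne_zero.2 h0
    set m := (μ : Measure (Euc d)) (ball x 1) with hmdef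
    have hm2 : 0 < m / 2 := ENNReal.half_pos hm.ne'
    obtain ⟨R, hR0, htight⟩ := aux_tight_seq hν hm2
    have hliminf := ProbabilityMeasure.le_liminf_measure_open_of_tendsto hμ
      (isOpen_ball (x := x) (ε := 1))
    have hmlt : m / 2 < m := ENNReal.half_lt_self hm.ne' (measure_ne_top _ _)
    have hev : ∀ᶠ k in atTop, m / 2 < (μk k : Measure (Euc d)) (ball x 1) :=
      eventually_lt_of_lt_liminf (lt_of_lt_of_le hmlt hliminf)
    refine ⟨(C : ℝ) + R, ?_⟩
    filter_upwards [hev] with k hk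
    -- find y in ball x 1 with T k y in closedBall 0 R
    have hTm : Measurable (T k) := (hTLip k).continuous.measurable
    have hexy : ∃ y ∈ ball x 1, T k y ∈ closedBall (0:(Euc d)) R := by
      by_contra hcon
      push_neg at hcon
      have hsub : ball x 1 ⊆ (T k ⁻¹' (closedBall (0:(Euc d)) R))ᶜ := fun y hy => hcon y hy
      have heq : (μk k : Measure (Euc d)) ((T k ⁻¹' (closedBall (0:(Euc d)) R))ᶜ)
          = (νk k : Measure (Euc d)) ((closedBall (0:(Euc d)) R)ᶜ) := by
        rw [← hTpush k, Measure.map_apply hTm measurableSet_closedBall.compl]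
        rfl
      have := lt_of_le_of_lt (measure_mono hsub) (heq ▸ htight k)
      exact absurd hk (not_lt.2 this.le)
    obtain ⟨y, hy, hyR⟩ := hexy
    rw [mem_closedBall, dist_zero_right] at hyR ⊢
    calc ‖T k x‖ = dist (T k x) 0 := (dist_zero_right _).symm
    _ ≤ dist (T k x) (T k y) + dist (T k y) 0 := dist_triangle _ _ _
    _ ≤ (C : ℝ) * dist x y + R := by
          rw [dist_zero_right]
          exact add_le_add ((hTLip k).dist_le_mul x y) hyR
    _ ≤ (C : ℝ) + R := by
          have : dist x y ≤ 1 := le_of_lt (by rw [dist_comm]; exact mem_ball.1 hy)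
          nlinarith [C.coe_nonneg]
  -- ultrafilter limit
  have hlim : ∀ x : (Euc d), ∃ z : (Euc d), Tendsto (fun k => T k x) U (𝓝 z) := by
    intro x
    obtain ⟨M, hM⟩ := hbd x
    have hmem : (↑(U.map (fun k => T k x)) : Filter (Euc d)) ≤ 𝓟 (closedBall (0:(Euc d)) M) := by
      rw [Ultrafilter.coe_map, le_principal_iff, mem_map]
      exact hU hM
    obtain ⟨z, _, hz⟩ := (isCompact_closedBall (0:(Euc d)) M).ultrafilter_le_nhds _ hmem
    refine ⟨z, ?_⟩
    rwa [Ultrafilter.coe_map] at hz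
  choose Tlim hTlim using hlim
  have hLip : LipschitzWith C Tlim := by
    apply LipschitzWith.of_dist_le_mul
    intro x y
    have h1 : Tendsto (fun k => dist (T k x) (T k y)) U (𝓝 (dist (Tlim x) (Tlim y))) :=
      (hTlim x).dist (hTlim y)
    exact le_of_tendsto h1 (Eventually.of_forall fun k => (hTLip k).dist_le_mul x y)
  refine ⟨Tlim, hLip, ?_⟩
  have hmeas : Measurable Tlim := hLip.continuous.measurable
  haveI : IsProbabilityMeasure (Measure.map Tlim (μ : Measure (Euc d))) :=
    Measure.isProbabilityMeasure_map hmeas.aemeasurable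
  have key : ∀ fr : BoundedContinuousFunction (Euc d) ℝ,
      ∫ x, fr (Tlim x) ∂(μ : Measure (Euc d)) = ∫ x, fr x ∂(ν : Measure (Euc d)) := by
    intro fr
    set g : BoundedContinuousFunction (Euc d) ℝ :=
      fr.compContinuous ⟨Tlim, hLip.continuous⟩ with hgdef
    have hgx : ∀ x, g x = fr (Tlim x) := fun x => rfl
    have hD : Tendsto (fun k => ∫ x, g x ∂(μk k : Measure (Euc d))) atTop
        (𝓝 (∫ x, g x ∂(μ : Measure (Euc d)))) :=
      ProbabilityMeasure.tendsto_iff_forall_integral_tendsto.mp hμ g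
    have hAeq : ∀ k, ∫ x, fr (T k x) ∂(μk k : Measure (Euc d))
        = ∫ x, fr x ∂(νk k : Measure (Euc d)) := by
      intro k
      rw [← hTpush k, integral_map ((hTLip k).continuous.measurable.aemeasurable)
        fr.continuous.aestronglyMeasurable]
    have hA : Tendsto (fun k => ∫ x, fr (T k x) ∂(μk k : Measure (Euc d))) atTop
        (𝓝 (∫ x, fr x ∂(ν : Measure (Euc d)))) := by
      have h2 := ProbabilityMeasure.tendsto_iff_forall_integral_tendsto.mp hν fr
      exact h2.congr fun k => (hAeq k).symm
    have hdiff : Tendsto (fun k => (∫ x, fr (T k x) ∂(μk k : Measure (Euc d)))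
        - ∫ x, g x ∂(μk k : Measure (Euc d))) U (𝓝 0) := by
      rw [NormedAddCommGroup.tendsto_nhds_zero]
      intro ε hε
      set B : ℝ := ‖fr‖ with hB
      have hB0 : 0 ≤ B := norm_nonneg _
      obtain ⟨R, hR0, htK⟩ := aux_tight_seq hμ
        (ε := ENNReal.ofReal (ε/(8*(B+1)))) (ENNReal.ofReal_pos.2 (by positivity))
      set K : Set (Euc d) := closedBall 0 R with hKdef
      have hKc : IsCompact K := isCompact_closedBall _ _
      have hKm : MeasurableSet K := measurableSet_closedBall
      have hunif : TendstoUniformlyOn T Tlim (U : Filter ℕ) K := by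
        rw [tendstoUniformlyOn_iff_tendstoUniformly_comp_coe]
        haveI : CompactSpace K := isCompact_iff_compactSpace.mp hKc
        have hequi : Equicontinuous (fun k => (fun y : K => T k y)) := by
          apply equicontinuous_of_continuity_modulus (fun t => (C:ℝ) * t)
          · have h3 : Tendsto (fun t : ℝ => (C:ℝ)*t) (𝓝 0) (𝓝 ((C:ℝ)*0)) :=
              (continuous_const.mul continuous_id).tendsto 0
            simpa using h3
          · intro x y k
            rw [Subtype.dist_eq]
            exact (hTLip k).dist_le_mul x y
        have hpt : Tendsto (fun k => (fun y : K => T k y)) (U : Filter ℕ)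
            (𝓝 (fun y : K => Tlim y)) :=
          tendsto_pi_nhds.2 fun y => hTlim y
        have h4 := (hequi.tendsto_uniformFun_iff_pi (U : Filter ℕ) (fun y : K => Tlim y)).mpr hpt
        rw [UniformFun.tendsto_iff_tendstoUniformly] at h4
        exact h4
      obtain ⟨R2, hR2⟩ := (hKc.image hLip.continuous).isBounded.subset_closedBall 0
      set L : Set (Euc d) := closedBall (0:Euc d) (R2+1) with hLdef
      have hLc : IsCompact L := isCompact_closedBall _ _
      obtain ⟨δ, hδ0, hmod⟩ := Metric.uniformContinuousOn_iff.mp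
        (hLc.uniformContinuousOn_of_continuous fr.continuous.continuousOn) (ε/4) (by positivity)
      have hev := Metric.tendstoUniformlyOn_iff.mp hunif (min δ 1) (lt_min hδ0 one_pos)
      filter_upwards [hev] with k hk
      have hptK : ∀ x ∈ K, |fr (T k x) - g x| < ε/4 := by
        intro x hx
        have h1 : dist (Tlim x) (T k x) < min δ 1 := hk x hx
        have hTlx : Tlim x ∈ L := closedBall_subset_closedBall (by linarith)
          (hR2 ⟨x, hx, rfl⟩)
        have hTkx : T k x ∈ L := by
          rw [mem_closedBall]
          calc dist (T k x) 0 ≤ dist (T k x) (Tlim x) + dist (Tlim x) 0 := dist_triangle _ _ _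
          _ ≤ 1 + R2 := add_le_add
              (le_of_lt (lt_of_lt_of_le (dist_comm (Tlim x) (T k x) ▸ h1) (min_le_right _ _)))
              (mem_closedBall.mp (hR2 ⟨x, hx, rfl⟩))
          _ = R2 + 1 := by ring
        have h5 := hmod _ hTkx _ hTlx
          (lt_of_lt_of_le (by rw [dist_comm]; exact h1) (min_le_left _ _))
        rw [Real.dist_eq] at h5
        rw [hgx]
        exact h5
      have hint1 : Integrable (fun x => fr (T k x)) (μk k : Measure (Euc d)) :=
        (fr.compContinuous ⟨T k, (hTLip k).continuous⟩).integrable _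
      have hint2 : Integrable (fun x => g x) (μk k : Measure (Euc d)) := g.integrable _
      have hintind : Integrable (Set.indicator Kᶜ (fun _ => 2*B)) (μk k : Measure (Euc d)) :=
        (integrable_const (2*B)).indicator hKm.compl
      set bfun : (Euc d) → ℝ := fun x => ε/4 + Set.indicator Kᶜ (fun _ => 2*B) x with hbf
      have hintb : Integrable bfun (μk k : Measure (Euc d)) :=
        (integrable_const (ε/4)).add hintind
      have hptwise : ∀ x, ‖fr (T k x) - g x‖ ≤ bfun x := by
        intro x
        rw [Real.norm_eq_abs]
        by_cases hx : x ∈ K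
        · have h6 := (hptK x hx).le
          have h0 : Set.indicator Kᶜ (fun _ => 2*B) x = 0 :=
            Set.indicator_of_notMem (by simpa using hx) _
          rw [hbf]
          simp only [h0, add_zero]
          exact h6
        · have h0 : Set.indicator Kᶜ (fun _ => 2*B) x = 2*B :=
            Set.indicator_of_mem (by simpa using hx) _
          have h1 : |fr (T k x)| ≤ B := by
            rw [← Real.norm_eq_abs]; exact fr.norm_coe_le_norm _
          have h2 : |g x| ≤ B := by
            rw [hgx, ← Real.norm_eq_abs]; exact fr.norm_coe_le_norm _
          have h7 : |fr (T k x) - g x| ≤ |fr (T k x)| + |g x| := abs_sub _ _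
          rw [hbf]
          simp only [h0]
          linarith
      have hb1 : ‖(∫ x, fr (T k x) ∂(μk k : Measure (Euc d)))
          - ∫ x, g x ∂(μk k : Measure (Euc d))‖ ≤ ∫ x, bfun x ∂(μk k : Measure (Euc d)) := by
        rw [← integral_sub hint1 hint2]
        refine le_trans (norm_integral_le_integral_norm _) ?_
        exact integral_mono (hint1.sub hint2).norm hintb fun x => hptwise x
      have hbval : ∫ x, bfun x ∂(μk k : Measure (Euc d))
          = ε/4 + (2*B) * ((μk k : Measure (Euc d)) Kᶜ).toReal := by
        rw [hbf, integral_add (integrable_const _) hintind, integral_const,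
          integral_indicator_const _ hKm.compl]
        simp [measure_univ, mul_comm]
        exact Or.inl rfl
      have ht : ((μk k : Measure (Euc d)) Kᶜ).toReal < ε/(8*(B+1)) :=
        ENNReal.toReal_lt_of_lt_ofReal (htK k)
      have ht0 : 0 ≤ ((μk k : Measure (Euc d)) Kᶜ).toReal := ENNReal.toReal_nonneg
      have h8 : (0:ℝ) < 8*(B+1) := by positivity
      have h9 : ((μk k : Measure (Euc d)) Kᶜ).toReal * (8*(B+1)) < ε := (lt_div_iff₀ h8).mp ht
      calc ‖(∫ x, fr (T k x) ∂(μk k : Measure (Euc d)))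
          - ∫ x, g x ∂(μk k : Measure (Euc d))‖
          ≤ ε/4 + (2*B) * ((μk k : Measure (Euc d)) Kᶜ).toReal := hbval ▸ hb1
        _ < ε := by nlinarith
    have hcombine : Tendsto (fun k => ∫ x, fr (T k x) ∂(μk k : Measure (Euc d))) (U : Filter ℕ)
        (𝓝 (∫ x, g x ∂(μ : Measure (Euc d)))) := by
      have h10 := hdiff.add (hD.mono_left hU)
      simpa using h10
    have hJI := tendsto_nhds_unique hcombine (hA.mono_left hU)
    simpa [hgx] using hJI
  apply ext_of_forall_lintegral_eq_of_IsFiniteMeasure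
  intro f
  have h1 := BoundedContinuousFunction.lintegral_lt_top_of_nnreal
    (Measure.map Tlim (μ : Measure (Euc d))) f
  have h2 := BoundedContinuousFunction.lintegral_lt_top_of_nnreal (ν : Measure (Euc d)) f
  apply (ENNReal.toReal_eq_toReal_iff' h1.ne h2.ne).mp
  rw [f.toReal_lintegral_coe_eq_integral, f.toReal_lintegral_coe_eq_integral]
  set fr : BoundedContinuousFunction (Euc d) ℝ :=
    BoundedContinuousFunction.comp _ aux_lip_toReal f with hfr
  have hfrx : ∀ x, fr x = (f x : ℝ) := fun x => rfl
  rw [integral_map hmeas.aemeasurable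
    (Continuous.aestronglyMeasurable
      (show Continuous fun y : Euc d => ((f y : ℝ)) from NNReal.continuous_coe.comp f.continuous))]
  have h11 := key fr
  simpa [hfrx] using h11
end

section
/- Let $\mu$ be a probability measure on $\mathbb{R}^d$ whose density satisfies $d\mu \le M\, d\varphi$ where $\varphi$ is a Gaussian with mean $m$ and covariance $\sigma^2 \mathrm{Id}$. Let $f : \mathbb{R}^d \to \mathbb{R}^k$ satisfy the Hölder-log bound $\|f(y) - f(m)\| \le \|y - m\|^{\delta} \log\big((\|y-m\| \wedge \tfrac12)^{-1}\big)^{-\theta}$ for some $\delta \in (0,1]$, $\theta > 0$. Then $\int \|f(y) - f(m)\|^2 \, d\mu(y) \le C\, \sigma^{2\delta} \log\big((\sigma^2 \wedge \tfrac12)^{-1}\big)^{-2\theta}$ for a constant $C$ depending only on $M$, $d$, $\delta$, $\theta$. -/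
open MeasureTheory Real Set
open scoped ENNReal


lemma aux_log_ge (r : ℝ) (hr : 0 < r) : Real.log 2 ≤ Real.log ((min r (1/2))⁻¹) := by
  have h1 : 0 < min r (1/2) := lt_min hr (by norm_num)
  have h2 : (2:ℝ) ≤ (min r (1/2))⁻¹ := by
    have h3 := inv_anti₀ h1 (min_le_right r (1/2))
    rw [show ((1:ℝ)/2)⁻¹ = 2 by norm_num] at h3
    exact h3
  exact Real.log_le_log (by norm_num) h2

lemma aux_key (σ r : ℝ) (hσ : 0 < σ) (hr : 0 < r) :
    Real.log ((min (σ^2) (1/2))⁻¹) ≤ 6 * Real.log ((min r (1/2))⁻¹) * max 1 (r/σ) := by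
  have hlog2 : (0.6931471803:ℝ) < Real.log 2 := Real.log_two_gt_d9
  have hℓ : Real.log 2 ≤ Real.log ((min r (1/2))⁻¹) := aux_log_ge r hr
  set ℓ := Real.log ((min r (1/2))⁻¹) with hℓdef
  have hmax1 : (1:ℝ) ≤ max 1 (r/σ) := le_max_left _ _
  have hmaxt : r/σ ≤ max 1 (r/σ) := le_max_right _ _
  by_cases hs : 1/2 ≤ σ^2
  · rw [min_eq_right hs]
    have : Real.log ((1/2:ℝ)⁻¹) = Real.log 2 := by norm_num
    rw [this]
    nlinarith
  · push_neg at hs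
    rw [min_eq_left hs.le]
    have hσ1 : σ < 1 := by nlinarith
    have hσinv : 1 < σ⁻¹ := (one_lt_inv₀ hσ).2 hσ1
    have hLσ : Real.log ((σ^2)⁻¹) = 2 * Real.log σ⁻¹ := by
      rw [Real.log_inv, Real.log_pow, Real.log_inv]; push_cast; ring
    rw [hLσ]
    have hlogσ : 0 < Real.log σ⁻¹ := Real.log_pos hσinv
    by_cases hr2 : 1/2 ≤ r
    · rw [min_eq_right hr2] at hℓdef
      have hℓval : ℓ = Real.log 2 := by rw [hℓdef]; norm_num
      by_cases hσ4 : (1/4:ℝ) ≤ σ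
      · have : Real.log σ⁻¹ ≤ Real.log 4 := by
          apply Real.log_le_log (by positivity)
          have h5 := inv_anti₀ (show (0:ℝ) < 1/4 by norm_num) hσ4
          rw [show ((1:ℝ)/4)⁻¹ = 4 by norm_num] at h5
          exact h5
        have h4 : Real.log (4:ℝ) = 2 * Real.log 2 := by
          rw [show (4:ℝ) = 2^2 by norm_num, Real.log_pow]; push_cast; ring
        nlinarith
      · push_neg at hσ4
        have : σ⁻¹/2 ≤ r/σ := by
          rw [div_le_div_iff₀ (by norm_num) hσ]
          have hone : σ⁻¹ * σ = 1 := inv_mul_cancel₀ (ne_of_gt hσ)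
          nlinarith
        have h2 : Real.log σ⁻¹ ≤ σ⁻¹ := (Real.log_le_sub_one_of_pos (by positivity)).trans (by linarith)
        nlinarith
    · push_neg at hr2
      rw [min_eq_left hr2.le] at hℓdef
      have hℓr : ℓ = Real.log r⁻¹ := hℓdef
      by_cases hc : Real.log σ⁻¹ ≤ 2 * Real.log r⁻¹
      · nlinarith
      · push_neg at hc
        have hrinv : 0 < Real.log r⁻¹ := Real.log_pos ((one_lt_inv₀ hr).2 (by linarith))
        have hts : Real.log (r/σ) = Real.log σ⁻¹ - Real.log r⁻¹ := by
          rw [Real.log_div (ne_of_gt hr) (ne_of_gt hσ), Real.log_inv, Real.log_inv]; ring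
        have hexp : Real.log (r/σ) ≤ r/σ := by
          have := Real.add_one_le_exp (Real.log (r/σ))
          rw [Real.exp_log (by positivity)] at this
          linarith
        have : Real.log σ⁻¹ / 2 ≤ r/σ := by
          rw [hts] at hexp; linarith
        nlinarith

lemma aux_ptwise (δ θ : ℝ) (hδ : 0 < δ) (hθ : 0 < θ) (n : ℕ) (hn : 2*δ + 2*θ ≤ (n:ℝ))
    (σ r : ℝ) (hσ : 0 < σ) (hr : 0 ≤ r) :
    (r ^ δ * Real.log ((min r (1/2))⁻¹) ^ (-θ))^2 ≤
      (36:ℝ)^θ * σ ^ (2*δ) * Real.log ((min (σ^2) (1/2))⁻¹) ^ (-(2*θ)) * (1 + r/σ)^n := by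
  have hL2 : Real.log 2 ≤ Real.log ((min (σ^2) (1/2))⁻¹) := aux_log_ge _ (by positivity)
  have hlog2 : (0:ℝ) < Real.log 2 := Real.log_pos (by norm_num)
  set L := Real.log ((min (σ^2) (1/2))⁻¹) with hLdef
  have hL : 0 < L := lt_of_lt_of_le hlog2 hL2
  rcases eq_or_lt_of_le hr with h0 | hrpos
  · rw [← h0, Real.zero_rpow (ne_of_gt hδ), zero_mul]
    norm_num
    positivity
  · have hℓ2 : Real.log 2 ≤ Real.log ((min r (1/2))⁻¹) := aux_log_ge _ hrpos
    set ℓ := Real.log ((min r (1/2))⁻¹) with hℓdef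
    have hℓ : 0 < ℓ := lt_of_lt_of_le hlog2 hℓ2
    set t := r / σ with htdef
    have ht : 0 < t := by positivity
    set m1 := max 1 t with hm1def
    have hm1 : (1:ℝ) ≤ m1 := le_max_left _ _
    have hm1t : t ≤ m1 := le_max_right _ _
    have hkey : L ≤ 6 * ℓ * m1 := aux_key σ r hσ hrpos
    -- squares to rpow
    have e1 : (r ^ δ * ℓ ^ (-θ))^2 = r ^ (2*δ) * ℓ ^ (-(2*θ)) := by
      rw [mul_pow, ← Real.rpow_natCast (r ^ δ) 2, ← Real.rpow_natCast (ℓ ^ (-θ)) 2,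
        ← Real.rpow_mul hrpos.le, ← Real.rpow_mul hℓ.le]
      norm_num
      rw [mul_comm δ 2]
      ring_nf
    rw [e1]
    -- bound ℓ ^ (-(2θ))
    have hq : L / (6 * m1) ≤ ℓ := by
      rw [div_le_iff₀ (by positivity)]
      nlinarith
    have h2θ : (0:ℝ) ≤ 2*θ := by linarith
    have hinv : ℓ ^ (-(2*θ)) ≤ (L / (6*m1)) ^ (-(2*θ)) :=
      Real.rpow_le_rpow_of_nonpos (by positivity) hq (by linarith)
    have hdiv : (L / (6*m1)) ^ (-(2*θ)) = L ^ (-(2*θ)) * (6*m1) ^ (2*θ) := by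
      rw [Real.rpow_neg (by positivity), Real.div_rpow hL.le (by positivity),
        Real.rpow_neg hL.le]
      field_simp
    rw [hdiv] at hinv
    -- bound r ^ (2δ)
    have hrt : r = σ * t := by rw [htdef]; field_simp
    have hr2 : r ^ (2*δ) = σ ^ (2*δ) * t ^ (2*δ) := by
      rw [hrt, Real.mul_rpow hσ.le ht.le]
    have htm : t ^ (2*δ) ≤ m1 ^ (2*δ) := Real.rpow_le_rpow ht.le hm1t (by linarith)
    -- combine
    have h6 : (6*m1) ^ (2*θ) = (6:ℝ)^(2*θ) * m1 ^ (2*θ) := Real.mul_rpow (by norm_num) (by linarith)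
    have h36 : (36:ℝ)^θ = (6:ℝ)^(2*θ) := by
      rw [show (36:ℝ) = 6^(2:ℕ) by norm_num, ← Real.rpow_natCast 6 2, ← Real.rpow_mul (by norm_num)]
      norm_num
    have hmm : m1 ^ (2*δ) * m1 ^ (2*θ) = m1 ^ (2*δ+2*θ) := (Real.rpow_add (by linarith) _ _).symm
    have hfin : m1 ^ (2*δ+2*θ) ≤ (1+t)^n := by
      calc m1 ^ (2*δ+2*θ) ≤ (1+t) ^ (2*δ+2*θ) := by
            apply Real.rpow_le_rpow (by linarith) _ (by linarith)
            exact max_le (by linarith) (by linarith)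
        _ ≤ (1+t) ^ ((n:ℝ)) := Real.rpow_le_rpow_of_exponent_le (by linarith) hn
        _ = (1+t)^n := Real.rpow_natCast _ _
    calc r ^ (2*δ) * ℓ ^ (-(2*θ))
        ≤ r ^ (2*δ) * (L ^ (-(2*θ)) * ((6:ℝ)^(2*θ) * m1 ^ (2*θ))) := by
          apply mul_le_mul_of_nonneg_left _ (Real.rpow_nonneg hr _)
          rw [← h6]; exact hinv
      _ = (6:ℝ)^(2*θ) * (σ ^ (2*δ) * L ^ (-(2*θ))) * (t ^ (2*δ) * m1 ^ (2*θ)) := by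
          rw [hr2]; ring
      _ ≤ (6:ℝ)^(2*θ) * (σ ^ (2*δ) * L ^ (-(2*θ))) * (m1 ^ (2*δ) * m1 ^ (2*θ)) := by
          apply mul_le_mul_of_nonneg_left _ (by positivity)
          exact mul_le_mul_of_nonneg_right htm (Real.rpow_nonneg (by linarith) _)
      _ = (6:ℝ)^(2*θ) * (σ ^ (2*δ) * L ^ (-(2*θ))) * m1 ^ (2*δ+2*θ) := by rw [hmm]
      _ ≤ (6:ℝ)^(2*θ) * (σ ^ (2*δ) * L ^ (-(2*θ))) * (1+t)^n := by
          apply mul_le_mul_of_nonneg_left hfin (by positivity)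
      _ = (36:ℝ)^θ * σ ^ (2*δ) * L ^ (-(2*θ)) * (1+t)^n := by rw [h36]; ring

lemma aux_exp (n : ℕ) (t : ℝ) (ht : 0 ≤ t) :
    (1+t)^n * Real.exp (-t^2/2) ≤ 2^n * (1 + (n.factorial:ℝ) * Real.exp 1) * Real.exp (-t^2/4) := by
  have hmax : (0:ℝ) ≤ max 1 t := le_trans zero_le_one (le_max_left _ _)
  have h1 : (1+t)^n ≤ 2^n * (1 + t^n) := by
    calc (1+t)^n ≤ (2 * max 1 t)^n := by
          apply pow_le_pow_left₀ (by linarith)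
          rcases le_total t 1 with h | h
          · have := le_max_left (1:ℝ) t; linarith
          · have := le_max_right (1:ℝ) t; linarith
      _ = 2^n * (max 1 t)^n := mul_pow _ _ _
      _ ≤ 2^n * (1 + t^n) := by
          apply mul_le_mul_of_nonneg_left _ (by positivity)
          rcases le_total t 1 with h | h
          · rw [max_eq_left h]
            have : (0:ℝ) ≤ t^n := by positivity
            simp [one_pow]; linarith
          · rw [max_eq_right h]
            nlinarith [pow_nonneg ht n]
  have h2 : Real.exp (-t^2/2) ≤ Real.exp (-t^2/4) := by
    apply Real.exp_le_exp.2; nlinarith [sq_nonneg (t-2)]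
  have h3 : t^n * Real.exp (-t^2/2) ≤ (n.factorial:ℝ) * Real.exp 1 * Real.exp (-t^2/4) := by
    have ha : t^n ≤ (n.factorial:ℝ) * Real.exp t := by
      have := Real.pow_div_factorial_le_exp t ht n
      have hf : (0:ℝ) < (n.factorial:ℝ) := by exact_mod_cast n.factorial_pos
      rw [div_le_iff₀ hf] at this; linarith
    have hb : Real.exp t ≤ Real.exp 1 * Real.exp (t^2/4) := by
      rw [← Real.exp_add]
      apply Real.exp_le_exp.2; nlinarith [sq_nonneg (t-2)]
    calc t^n * Real.exp (-t^2/2) ≤ ((n.factorial:ℝ) * (Real.exp 1 * Real.exp (t^2/4))) * Real.exp (-t^2/2) := by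
          apply mul_le_mul_of_nonneg_right _ (Real.exp_nonneg _)
          calc t^n ≤ (n.factorial:ℝ) * Real.exp t := ha
            _ ≤ (n.factorial:ℝ) * (Real.exp 1 * Real.exp (t^2/4)) := by
                apply mul_le_mul_of_nonneg_left hb (by positivity)
      _ = (n.factorial:ℝ) * Real.exp 1 * (Real.exp (t^2/4) * Real.exp (-t^2/2)) := by ring
      _ = (n.factorial:ℝ) * Real.exp 1 * Real.exp (-t^2/4) := by
          rw [← Real.exp_add]; ring_nf
  calc (1+t)^n * Real.exp (-t^2/2) ≤ (2^n * (1 + t^n)) * Real.exp (-t^2/2) := by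
        apply mul_le_mul_of_nonneg_right h1 (Real.exp_nonneg _)
    _ = 2^n * (Real.exp (-t^2/2) + t^n * Real.exp (-t^2/2)) := by ring
    _ ≤ 2^n * (Real.exp (-t^2/4) + (n.factorial:ℝ) * Real.exp 1 * Real.exp (-t^2/4)) := by
        apply mul_le_mul_of_nonneg_left _ (by positivity)
        exact add_le_add h2 h3
    _ = 2^n * (1 + (n.factorial:ℝ) * Real.exp 1) * Real.exp (-t^2/4) := by ring

variable {d : ℕ}

lemma aux_int (b : ℝ) (hb : 0 < b) (m : EuclideanSpace ℝ (Fin d)) :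
    Integrable (fun y : EuclideanSpace ℝ (Fin d) => Real.exp (-b * ‖y - m‖^2)) := by
  have h0 : Integrable (fun v : EuclideanSpace ℝ (Fin d) => Real.exp (-b * ‖v‖^2)) := by
    have hc := GaussianFourier.integrable_cexp_neg_mul_sq_norm_add (V := EuclideanSpace ℝ (Fin d))
      (b := (b:ℂ)) (by simpa using hb) 0 (0 : EuclideanSpace ℝ (Fin d))
    have := hc.norm
    convert this using 2 with v
    rw [show (-((b:ℂ)) * ((‖v‖:ℝ):ℂ)^2 + 0 * (((inner ℝ (0 : EuclideanSpace ℝ (Fin d)) v : ℝ)):ℂ)) = (((-b * ‖v‖^2 : ℝ)):ℂ) by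
      push_cast; ring]
    rw [Complex.norm_exp_ofReal]
  have hmp := measurePreserving_sub_right (volume : Measure (EuclideanSpace ℝ (Fin d))) m
  have := (hmp.integrable_comp_emb (MeasurableEquiv.subRight m).measurableEmbedding).2 h0
  exact this

lemma aux_val (b : ℝ) (hb : 0 < b) (m : EuclideanSpace ℝ (Fin d)) :
    ∫ y : EuclideanSpace ℝ (Fin d), Real.exp (-b * ‖y - m‖^2) = (π/b)^((d:ℝ)/2) := by
  rw [show (fun y : EuclideanSpace ℝ (Fin d) => Real.exp (-b * ‖y - m‖^2))
      = (fun y => (fun v : EuclideanSpace ℝ (Fin d) => Real.exp (-b * ‖v‖^2)) (y - m)) from rfl]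
  rw [integral_sub_right_eq_self (μ := volume) (fun v : EuclideanSpace ℝ (Fin d) => Real.exp (-b * ‖v‖^2)) m]
  rw [GaussianFourier.integral_rexp_neg_mul_sq_norm hb]
  congr 1
  rw [finrank_euclideanSpace_fin]

/-- concentration of a Hölder-log function around the Gaussian mean,
under a measure dominated by a Gaussian. -/
theorem stmt_9 (M : ℝ) (hM : 0 < M) (d : ℕ) (δ θ : ℝ)
    (hδ : δ ∈ Ioc (0 : ℝ) 1) (hθ : 0 < θ) :
    ∃ C > 0, ∀ (k : ℕ) (μ : Measure (EuclideanSpace ℝ (Fin d)))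
      (m : EuclideanSpace ℝ (Fin d)) (σ : ℝ)
      (f : EuclideanSpace ℝ (Fin d) → EuclideanSpace ℝ (Fin k)),
      0 < σ → IsProbabilityMeasure μ →
      μ ≤ ENNReal.ofReal M •
        (volume.withDensity fun y => ENNReal.ofReal
          ((2 * π * σ ^ 2) ^ (-(d : ℝ) / 2) *
            Real.exp (-‖y - m‖ ^ 2 / (2 * σ ^ 2)))) →
      (∀ y, ‖f y - f m‖ ≤
        ‖y - m‖ ^ δ * Real.log ((min ‖y - m‖ (1 / 2))⁻¹) ^ (-θ)) →
      ∫ y, ‖f y - f m‖ ^ 2 ∂μ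
        ≤ C * σ ^ (2 * δ) * Real.log ((min (σ ^ 2) (1 / 2))⁻¹) ^ (-(2 * θ)) := by
  obtain ⟨hδ0, hδ1⟩ := hδ
  set n : ℕ := ⌈2*δ + 2*θ⌉₊ with hn
  have hnge : 2*δ + 2*θ ≤ (n:ℝ) := Nat.le_ceil _
  set C : ℝ := M * 36^θ * 2^n * (1 + (n.factorial:ℝ) * Real.exp 1) * 2^((d:ℝ)/2) with hC
  have hC0 : 0 < C := by
    have he : (0:ℝ) < Real.exp 1 := Real.exp_pos 1
    have hfac : (0:ℝ) < (n.factorial:ℝ) := by exact_mod_cast n.factorial_pos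
    positivity
  refine ⟨C, hC0, ?_⟩
  intro k μ m σ f hσ hprob hle hf
  have hL2 : Real.log 2 ≤ Real.log ((min (σ^2) (1/2))⁻¹) := aux_log_ge _ (by positivity)
  set L := Real.log ((min (σ^2) (1/2))⁻¹) with hLdef
  have hL : 0 < L := lt_of_lt_of_le (Real.log_pos (by norm_num)) hL2
  have hRHS : 0 ≤ C * σ ^ (2*δ) * L ^ (-(2*θ)) :=
    mul_nonneg (mul_nonneg hC0.le (Real.rpow_nonneg hσ.le _)) (Real.rpow_nonneg hL.le _)
  by_cases hInt : Integrable (fun y => ‖f y - f m‖^2) μ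
  swap
  · rw [integral_undef hInt]; exact hRHS
  set A : ℝ := (36:ℝ)^θ * σ^(2*δ) * L^(-(2*θ)) with hA
  have hA0 : 0 < A :=
    mul_pos (mul_pos (Real.rpow_pos_of_pos (by norm_num) _) (Real.rpow_pos_of_pos hσ _))
      (Real.rpow_pos_of_pos hL _)
  have hpt : ∀ y, ‖f y - f m‖^2 ≤ A * (1 + ‖y - m‖/σ)^n := by
    intro y
    have h1 : ‖f y - f m‖^2 ≤ (‖y-m‖^δ * (Real.log ((min ‖y-m‖ (1/2))⁻¹))^(-θ))^2 :=
      pow_le_pow_left₀ (norm_nonneg _) (hf y) 2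
    exact h1.trans (aux_ptwise δ θ hδ0 hθ n hnge σ ‖y-m‖ hσ (norm_nonneg _))
  set dens : EuclideanSpace ℝ (Fin d) → ℝ≥0∞ := fun y => ENNReal.ofReal
      ((2 * π * σ ^ 2) ^ (-(d : ℝ) / 2) * Real.exp (-‖y - m‖ ^ 2 / (2 * σ ^ 2))) with hdens
  have hdensmeas : Measurable dens := by
    apply Measurable.ennreal_ofReal
    fun_prop
  have hgmeas : Measurable (fun y : EuclideanSpace ℝ (Fin d) =>
      ENNReal.ofReal (A * (1 + ‖y - m‖/σ)^n)) := by
    apply Measurable.ennreal_ofReal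
    fun_prop
  set b : ℝ := 1/(4*σ^2) with hb
  have hbpos : 0 < b := by positivity
  set K : ℝ := A * (2^n * (1 + (n.factorial:ℝ) * Real.exp 1)) * (2 * π * σ ^ 2) ^ (-(d : ℝ) / 2)
    with hK
  have hKpos : 0 < K := by
    have he : (0:ℝ) < Real.exp 1 := Real.exp_pos 1
    have hfac : (0:ℝ) < (n.factorial:ℝ) := by exact_mod_cast n.factorial_pos
    positivity
  -- pointwise bound after withDensity
  have hptw : ∀ y : EuclideanSpace ℝ (Fin d),
      dens y * ENNReal.ofReal (A * (1 + ‖y - m‖/σ)^n)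
        ≤ ENNReal.ofReal (K * Real.exp (-b * ‖y - m‖^2)) := by
    intro y
    rw [hdens, ← ENNReal.ofReal_mul (by positivity)]
    apply ENNReal.ofReal_le_ofReal
    set r : ℝ := ‖y - m‖ with hr
    have hr0 : 0 ≤ r := norm_nonneg _
    set t : ℝ := r/σ with ht
    have ht0 : 0 ≤ t := by positivity
    have he1 : -r^2/(2*σ^2) = -t^2/2 := by rw [ht]; field_simp
    have he2 : -t^2/4 = -b * r^2 := by rw [ht, hb]; field_simp
    have hexp := aux_exp n t ht0
    rw [he2] at hexp
    calc (2 * π * σ ^ 2) ^ (-(d : ℝ) / 2) * Real.exp (-r ^ 2 / (2 * σ ^ 2)) * (A * (1 + t)^n)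
        = A * (2 * π * σ ^ 2) ^ (-(d : ℝ) / 2) * ((1 + t)^n * Real.exp (-t^2/2)) := by
          rw [he1]; ring
      _ ≤ A * (2 * π * σ ^ 2) ^ (-(d : ℝ) / 2) * (2^n * (1 + (n.factorial:ℝ) * Real.exp 1)
            * Real.exp (-b * r^2)) := by
          apply mul_le_mul_of_nonneg_left hexp (by positivity)
      _ = K * Real.exp (-b * r^2) := by rw [hK]; ring
  -- main chain
  have hmain : ∫⁻ y, ENNReal.ofReal (‖f y - f m‖^2) ∂μ
      ≤ ENNReal.ofReal (C * σ ^ (2*δ) * L ^ (-(2*θ))) := by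
    calc ∫⁻ y, ENNReal.ofReal (‖f y - f m‖^2) ∂μ
        ≤ ∫⁻ y, ENNReal.ofReal (A * (1 + ‖y - m‖/σ)^n) ∂μ :=
          lintegral_mono fun y => ENNReal.ofReal_le_ofReal (hpt y)
      _ ≤ ∫⁻ y, ENNReal.ofReal (A * (1 + ‖y - m‖/σ)^n)
            ∂(ENNReal.ofReal M • (volume.withDensity dens)) :=
          lintegral_mono' hle le_rfl
      _ = ENNReal.ofReal M * ∫⁻ y, ENNReal.ofReal (A * (1 + ‖y - m‖/σ)^n)
            ∂(volume.withDensity dens) := lintegral_smul_measure _ _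
      _ = ENNReal.ofReal M * ∫⁻ y, dens y * ENNReal.ofReal (A * (1 + ‖y - m‖/σ)^n) ∂volume := by
          rw [lintegral_withDensity_eq_lintegral_mul _ hdensmeas hgmeas]
          rfl
      _ ≤ ENNReal.ofReal M * ∫⁻ y, ENNReal.ofReal (K * Real.exp (-b * ‖y - m‖^2)) ∂volume := by
          exact mul_le_mul_right (lintegral_mono hptw) _
      _ = ENNReal.ofReal M * ENNReal.ofReal (K * (π/b)^((d:ℝ)/2)) := by
          rw [← ofReal_integral_eq_lintegral_ofReal (((aux_int b hbpos m).const_mul K))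
            (Filter.Eventually.of_forall fun y => by positivity)]
          rw [integral_const_mul, aux_val b hbpos m]
      _ = ENNReal.ofReal (M * (K * (π/b)^((d:ℝ)/2))) := by
          rw [← ENNReal.ofReal_mul hM.le]
      _ = ENNReal.ofReal (C * σ ^ (2*δ) * L ^ (-(2*θ))) := by
          congr 1
          have hpb : π/b = 4*π*σ^2 := by rw [hb]; field_simp
          have hpref : (2*π*σ^2:ℝ) ^ (-(d:ℝ)/2) * (4*π*σ^2) ^ ((d:ℝ)/2) = 2^((d:ℝ)/2) := by
            have h1 : (2*π*σ^2:ℝ) ^ (-(d:ℝ)/2) * (4*π*σ^2) ^ ((d:ℝ)/2)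
                = ((4*π*σ^2)/(2*π*σ^2)) ^ ((d:ℝ)/2) := by
              rw [Real.div_rpow (by positivity) (by positivity),
                show -(d:ℝ)/2 = -((d:ℝ)/2) by ring, Real.rpow_neg (by positivity),
                div_eq_mul_inv]
              ring
            rw [h1, show (4*π*σ^2)/(2*π*σ^2) = (2:ℝ) by field_simp; ring]
          rw [hpb, hK, hA, hC]
          linear_combination (M * (36^θ * σ^(2*δ) * L^(-(2*θ))) *
            (2^n * (1 + (n.factorial:ℝ) * Real.exp 1))) * hpref
  rw [integral_eq_lintegral_of_nonneg_ae (Filter.Eventually.of_forall fun y => sq_nonneg _)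
    hInt.aestronglyMeasurable]
  exact ENNReal.toReal_le_of_le_ofReal hRHS hmain
end

section
/- Let $p$ be a compactly supported probability density on $\mathbb{R}^d$, absolutely continuous with respect to $\gamma_d$, with $Q_t r(x) > 0$ for all $t \in [0,1)$, $x$, where $r = p/\gamma_d$. Then for every $t \in [0,1)$ the velocity field $V(s,x) = \frac{1}{1-s^2}\int (y - sx)\, p^{s,x}(y)\, dy$ satisfies: (i) $\|V(s,x)\| \le \frac{R + \|x\|}{1-t^2}$ for all $s \in [0,t]$, where $R$ is such that $\mathrm{supp}(p) \subset B(0,R)$; and (ii) $\|\nabla_x V(s,x)\| \le \frac{C}{(1-t^2)^2}$ for a constant $C$ depending only on $R$. -/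
open MeasureTheory Real Set
open scoped RealInnerProductSpace

set_option maxHeartbeats 2000000
set_option synthInstance.maxHeartbeats 200000

lemma aux_gauss_hasFDerivAt {d : ℕ} (s σ2 : ℝ) (hσ2 : σ2 ≠ 0) (c a : ℝ)
    (y x : EuclideanSpace ℝ (Fin d)) :
    HasFDerivAt (fun x' : EuclideanSpace ℝ (Fin d) =>
        c * Real.exp (-‖y - s • x'‖ ^ 2 / (2 * σ2)) * a)
      (((s / σ2) * (c * Real.exp (-‖y - s • x‖ ^ 2 / (2 * σ2)) * a)) •
        innerSL ℝ (y - s • x)) x := by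
  have h1 : HasFDerivAt (fun x' : EuclideanSpace ℝ (Fin d) => y - s • x')
      (-(s • ContinuousLinearMap.id ℝ (EuclideanSpace ℝ (Fin d)))) x :=
    ((hasFDerivAt_id x).const_smul s).const_sub y
  have h2 := h1.norm_sq
  have heq : (fun x' : EuclideanSpace ℝ (Fin d) => -‖y - s • x'‖ ^ 2 / (2 * σ2))
      = fun x' => ‖y - s • x'‖ ^ 2 * (-(2 * σ2)⁻¹) := by
    funext x'; ring
  have h3 := h2.mul_const (-(2 * σ2)⁻¹)
  have h4 := ((h3.exp.const_mul c).mul_const a)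
  simp only [show ∀ b : ℝ, b * -(2 * σ2)⁻¹ = -b / (2 * σ2) from fun b => by ring] at h4
  refine h4.congr_fderiv (Eq.symm ?_)
  ext h
  simp only [ContinuousLinearMap.coe_smul', Pi.smul_apply, innerSL_apply_apply,
    ContinuousLinearMap.smulRight_apply, ContinuousLinearMap.comp_apply,
    ContinuousLinearMap.neg_apply, ContinuousLinearMap.coe_id', id_eq,
    ContinuousLinearMap.smul_apply, innerSL_apply_apply, smul_eq_mul, two_smul,
    real_inner_smul_right, inner_neg_right, ContinuousLinearMap.add_apply]
  field_simp
  have hsum : (∑ i, (y i - s * x i) * h i)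
      = (∑ i, y i * h i) - s * ∑ i, x i * h i := by
    simp [sub_mul, Finset.sum_sub_distrib, Finset.mul_sum, mul_assoc]
  ring

lemma aux_gauss_hasFDerivAt_smul {d : ℕ} (s σ2 : ℝ) (hσ2 : σ2 ≠ 0) (c a : ℝ)
    (y x : EuclideanSpace ℝ (Fin d)) :
    HasFDerivAt (fun x' : EuclideanSpace ℝ (Fin d) =>
        (c * Real.exp (-‖y - s • x'‖ ^ 2 / (2 * σ2)) * a) • y)
      (((s / σ2) * (c * Real.exp (-‖y - s • x‖ ^ 2 / (2 * σ2)) * a)) •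
        ((innerSL ℝ (y - s • x)).smulRight y)) x := by
  have h := (aux_gauss_hasFDerivAt s σ2 hσ2 c a y x).smul_const y
  refine h.congr_fderiv (Eq.symm ?_)
  ext v
  simp [mul_smul]

/-- bounds on the velocity field and its spatial Jacobian for a
compactly supported target density. -/
theorem stmt_14 (R : ℝ) (hR : 0 < R) :
    ∃ C > 0, ∀ (d : ℕ)
      (r p γd : EuclideanSpace ℝ (Fin d) → ℝ)
      (φ : ℝ → EuclideanSpace ℝ (Fin d) → EuclideanSpace ℝ (Fin d) → ℝ)
      (Q : ℝ → EuclideanSpace ℝ (Fin d) → ℝ)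
      (ptx : ℝ → EuclideanSpace ℝ (Fin d) → EuclideanSpace ℝ (Fin d) → ℝ)
      (V : ℝ → EuclideanSpace ℝ (Fin d) → EuclideanSpace ℝ (Fin d)),
      (∀ y, γd y = (2 * π) ^ (-(d : ℝ) / 2) * Real.exp (-‖y‖ ^ 2 / 2)) →
      (∀ y, 0 ≤ r y) → (∀ y, p y = r y * γd y) → (∫ y, p y = 1) →
      (∀ y, p y ≠ 0 → ‖y‖ < R) →
      (∀ s x y, φ s x y = (2 * π * (1 - s ^ 2)) ^ (-(d : ℝ) / 2) *
        Real.exp (-‖y - s • x‖ ^ 2 / (2 * (1 - s ^ 2)))) →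
      (∀ s x, Q s x = ∫ y, φ s x y * r y) →
      (∀ s ∈ Ico (0 : ℝ) 1, ∀ x, 0 < Q s x) →
      (∀ s x y, ptx s x y = φ s x y * r y / Q s x) →
      (∀ s x, V s x = (1 / (1 - s ^ 2)) • ∫ y, ptx s x y • (y - s • x)) →
      ∀ t ∈ Ico (0 : ℝ) 1, ∀ s ∈ Icc (0 : ℝ) t, ∀ x,
        ‖V s x‖ ≤ (R + ‖x‖) / (1 - t ^ 2) ∧
        ‖fderiv ℝ (V s) x‖ ≤ C / (1 - t ^ 2) ^ 2 := by
  refine ⟨2 * R ^ 2 + 1, by positivity, ?_⟩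
  intro d r p γd φ Q ptx V hγ hr0 hp hpint hsupp hφ hQ hQP hptx hV
  -- basic facts about r and p
  have hγpos : ∀ y, 0 < γd y := by
    intro y; rw [hγ]; positivity
  have hrsupp : ∀ y, r y ≠ 0 → ‖y‖ < R := fun y hy =>
    hsupp y (by rw [hp]; exact mul_ne_zero hy (hγpos y).ne')
  have hp_int : Integrable p := by
    by_contra h
    rw [integral_undef h] at hpint
    norm_num at hpint
  have hγcont : Continuous γd := by
    have hfun : γd = fun y => (2 * π) ^ (-(d : ℝ) / 2) * Real.exp (-‖y‖ ^ 2 / 2) := funext hγ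
    rw [hfun]; fun_prop
  have hr_eq : ∀ y, r y = p y * (γd y)⁻¹ := by
    intro y; rw [hp, mul_assoc, mul_inv_cancel₀ (hγpos y).ne', mul_one]
  have hr_meas : AEStronglyMeasurable r := by
    have hfun : r = fun y => p y * (γd y)⁻¹ := funext hr_eq
    rw [hfun]
    exact hp_int.aestronglyMeasurable.mul
      ((hγcont.inv₀ fun y => (hγpos y).ne').aestronglyMeasurable)
  have hp0 : ∀ y, 0 ≤ p y := fun y => by
    rw [hp]; exact mul_nonneg (hr0 y) (hγpos y).le
  have hr_le : ∀ y, r y ≤ ((2 * π) ^ ((d : ℝ) / 2) * Real.exp (R ^ 2 / 2)) * p y := by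
    intro y
    by_cases hy : r y = 0
    · rw [hy]; exact mul_nonneg (by positivity) (hp0 y)
    · have hyR : ‖y‖ ≤ R := (hrsupp y hy).le
      rw [hr_eq y, hγ y, mul_inv, ← Real.exp_neg]
      have h1 : ((2 * π) ^ (-(d : ℝ) / 2))⁻¹ = (2 * π) ^ ((d : ℝ) / 2) := by
        rw [show (-(d : ℝ) / 2) = -((d : ℝ) / 2) by ring,
          Real.rpow_neg (by positivity), inv_inv]
      rw [h1, show -(-‖y‖ ^ 2 / 2) = ‖y‖ ^ 2 / 2 by ring]
      have h2 : Real.exp (‖y‖ ^ 2 / 2) ≤ Real.exp (R ^ 2 / 2) := by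
        apply Real.exp_le_exp.2
        have := pow_le_pow_left₀ (norm_nonneg y) hyR 2
        linarith
      calc p y * ((2 * π) ^ ((d : ℝ) / 2) * Real.exp (‖y‖ ^ 2 / 2))
          ≤ p y * ((2 * π) ^ ((d : ℝ) / 2) * Real.exp (R ^ 2 / 2)) := by
            exact mul_le_mul_of_nonneg_left
              (mul_le_mul_of_nonneg_left h2 (by positivity)) (hp0 y)
        _ = (2 * π) ^ ((d : ℝ) / 2) * Real.exp (R ^ 2 / 2) * p y := by ring
  have hr_int : Integrable r := by
    refine (hp_int.const_mul ((2 * π) ^ ((d : ℝ) / 2) * Real.exp (R ^ 2 / 2))).mono'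
      hr_meas (ae_of_all _ fun y => ?_)
    rw [Real.norm_eq_abs, abs_of_nonneg (hr0 y)]
    exact hr_le y
  intro t ht s hs x
  obtain ⟨ht0, ht1⟩ := ht
  obtain ⟨hs0, hst⟩ := hs
  have hs1 : s < 1 := lt_of_le_of_lt hst ht1
  have h1t : 0 < 1 - t ^ 2 := by nlinarith
  have hσ : 0 < 1 - s ^ 2 := by nlinarith
  have hσt : 1 - t ^ 2 ≤ 1 - s ^ 2 := by nlinarith [pow_le_pow_left₀ hs0 hst 2]
  have hQx : ∀ x', 0 < Q s x' := fun x' => hQP s ⟨hs0, hs1⟩ x'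
  have hcφ : 0 < (2 * π * (1 - s ^ 2)) ^ (-(d : ℝ) / 2) :=
    Real.rpow_pos_of_pos (by positivity) _
  have hφpos : ∀ (x' y : EuclideanSpace ℝ (Fin d)), 0 < φ s x' y := by
    intro x' y; rw [hφ]; positivity
  have hφle : ∀ (x' y : EuclideanSpace ℝ (Fin d)),
      φ s x' y ≤ (2 * π * (1 - s ^ 2)) ^ (-(d : ℝ) / 2) := by
    intro x' y; rw [hφ]
    have h1 : Real.exp (-‖y - s • x'‖ ^ 2 / (2 * (1 - s ^ 2))) ≤ 1 :=
      Real.exp_le_one_iff.mpr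
        (div_nonpos_of_nonpos_of_nonneg (neg_nonpos.mpr (by positivity)) (by nlinarith))
    exact mul_le_of_le_one_right hcφ.le h1
  have hφcont : ∀ x', Continuous (fun y => φ s x' y) := by
    intro x'
    have hfun : (fun y => φ s x' y) = fun y => (2 * π * (1 - s ^ 2)) ^ (-(d : ℝ) / 2) *
        Real.exp (-‖y - s • x'‖ ^ 2 / (2 * (1 - s ^ 2))) := funext (hφ s x')
    rw [hfun]; fun_prop
  -- integrability of the basic integrands
  have hint1 : ∀ x', Integrable (fun y => φ s x' y * r y) := by
    intro x'
    refine (hr_int.const_mul ((2 * π * (1 - s ^ 2)) ^ (-(d : ℝ) / 2))).mono'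
      ((hφcont x').aestronglyMeasurable.mul hr_meas) (ae_of_all _ fun y => ?_)
    rw [Real.norm_eq_abs, abs_of_nonneg (mul_nonneg (hφpos x' y).le (hr0 y))]
    exact mul_le_mul_of_nonneg_right (hφle x' y) (hr0 y)
  have hint2 : ∀ x', Integrable (fun y => (φ s x' y * r y) • y) := by
    intro x'
    refine (hr_int.const_mul ((2 * π * (1 - s ^ 2)) ^ (-(d : ℝ) / 2) * R)).mono'
      (((hφcont x').aestronglyMeasurable.mul hr_meas).smul aestronglyMeasurable_id)
      (ae_of_all _ fun y => ?_)
    rw [norm_smul, Real.norm_eq_abs, abs_of_nonneg (mul_nonneg (hφpos x' y).le (hr0 y))]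
    by_cases hy : r y = 0
    · simp [hy]
    · have hyR : ‖y‖ ≤ R := (hrsupp y hy).le
      calc φ s x' y * r y * ‖y‖
          ≤ (2 * π * (1 - s ^ 2)) ^ (-(d : ℝ) / 2) * r y * R :=
            mul_le_mul (mul_le_mul_of_nonneg_right (hφle x' y) (hr0 y)) hyR
              (norm_nonneg y) (mul_nonneg hcφ.le (hr0 y))
        _ = (2 * π * (1 - s ^ 2)) ^ (-(d : ℝ) / 2) * R * r y := by ring
  -- part (i)
  refine ⟨?_, ?_⟩
  · -- velocity bound
    rw [hV s x, norm_smul]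
    have hI : ‖∫ y, ptx s x y • (y - s • x)‖ ≤ R + ‖x‖ := by
      refine le_trans (norm_integral_le_integral_norm _) ?_
      have hmono : (∫ y, ‖ptx s x y • (y - s • x)‖)
          ≤ ∫ y, (R + ‖x‖) * ((Q s x)⁻¹ * (φ s x y * r y)) := by
        refine integral_mono_of_nonneg (ae_of_all _ fun y => norm_nonneg _)
          (((hint1 x).const_mul _).const_mul _) (ae_of_all _ fun y => ?_)
        dsimp only
        rw [hptx, norm_smul]
        by_cases hy : r y = 0
        · simp [hy]
        · have hd : ‖y - s • x‖ ≤ R + ‖x‖ := by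
            refine le_trans (norm_sub_le _ _) ?_
            have h1 : ‖y‖ ≤ R := (hrsupp y hy).le
            have h2 : ‖s • x‖ ≤ ‖x‖ := by
              rw [norm_smul, Real.norm_eq_abs, abs_of_nonneg hs0]
              nlinarith [norm_nonneg x]
            linarith
          rw [Real.norm_eq_abs, abs_of_nonneg
            (div_nonneg (mul_nonneg (hφpos x y).le (hr0 y)) (hQx x).le)]
          calc φ s x y * r y / Q s x * ‖y - s • x‖
              ≤ φ s x y * r y / Q s x * (R + ‖x‖) :=
                mul_le_mul_of_nonneg_left hd
                  (div_nonneg (mul_nonneg (hφpos x y).le (hr0 y)) (hQx x).le)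
            _ = (R + ‖x‖) * ((Q s x)⁻¹ * (φ s x y * r y)) := by ring
      refine le_trans hmono ?_
      rw [integral_const_mul, integral_const_mul, ← hQ s x,
        inv_mul_cancel₀ (hQx x).ne', mul_one]
    rw [Real.norm_eq_abs, abs_of_pos (by positivity : (0:ℝ) < 1 / (1 - s ^ 2))]
    calc 1 / (1 - s ^ 2) * ‖∫ y, ptx s x y • (y - s • x)‖
        ≤ 1 / (1 - s ^ 2) * (R + ‖x‖) := by
          exact mul_le_mul_of_nonneg_left hI (by positivity)
      _ = (R + ‖x‖) / (1 - s ^ 2) := by ring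
      _ ≤ (R + ‖x‖) / (1 - t ^ 2) := by
          apply div_le_div_of_nonneg_left (by positivity) h1t hσt
  · -- Jacobian bound
    have hVfun : V s = fun x' => (1 / (1 - s ^ 2)) •
        ((Q s x')⁻¹ • (∫ y, (φ s x' y * r y) • y) - s • x') := by
      funext x'
      rw [hV s x']
      congr 1
      have hsplit : (fun y => ptx s x' y • (y - s • x'))
          = fun y => (Q s x')⁻¹ • ((φ s x' y * r y) • y)
            - ((Q s x')⁻¹ * (φ s x' y * r y)) • (s • x') := by
        funext y
        rw [hptx]
        match_scalars
        · field_simp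
        · field_simp
      have hA : Integrable (fun y => (Q s x')⁻¹ • ((φ s x' y * r y) • y)) :=
        (hint2 x').smul ((Q s x')⁻¹)
      have hB : Integrable (fun y => ((Q s x')⁻¹ * (φ s x' y * r y)) • (s • x')) :=
        ((hint1 x').const_mul ((Q s x')⁻¹)).smul_const (s • x')
      rw [hsplit, integral_sub hA hB,
        integral_smul, integral_smul_const, integral_const_mul, ← hQ s x',
        inv_mul_cancel₀ (hQx x').ne', one_smul]
    -- derivative of Q s
    have hQ' : HasFDerivAt (fun x' => ∫ y, φ s x' y * r y)
        (∫ y, ((s / (1 - s ^ 2)) * (φ s x y * r y)) • innerSL ℝ (y - s • x)) x := by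
      apply hasFDerivAt_integral_of_dominated_of_fderiv_le (s := Metric.ball x 1)
        (F' := fun x' y => ((s / (1 - s ^ 2)) * (φ s x' y * r y)) • innerSL ℝ (y - s • x'))
        (bound := fun y => ((1 / (1 - s ^ 2)) * (2 * π * (1 - s ^ 2)) ^ (-(d : ℝ) / 2)
          * (R + ‖x‖ + 1)) * r y) (Metric.ball_mem_nhds x one_pos)
      · exact Filter.Eventually.of_forall fun x' =>
          ((hφcont x').aestronglyMeasurable.mul hr_meas)
      · exact hint1 x
      · have heqf : (fun y => ((s / (1 - s ^ 2)) * (φ s x y * r y)) • innerSL ℝ (y - s • x))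
            = fun y => r y • (((s / (1 - s ^ 2)) * φ s x y) • innerSL ℝ (y - s • x)) := by
          funext y; rw [smul_smul]; congr 1; ring
        rw [heqf]
        exact hr_meas.smul (Continuous.aestronglyMeasurable
          (Continuous.smul (continuous_const.mul (hφcont x))
            ((innerSL ℝ).continuous.comp (continuous_id.sub continuous_const))))
      · refine ae_of_all _ fun y x' hx' => ?_
        rw [norm_smul (s / (1 - s ^ 2) * (φ s x' y * r y)) (innerSL ℝ (y - s • x')),
          innerSL_apply_norm (𝕜 := ℝ), Real.norm_eq_abs,
          abs_of_nonneg (mul_nonneg (div_nonneg hs0 hσ.le)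
            (mul_nonneg (hφpos x' y).le (hr0 y)))]
        by_cases hy : r y = 0
        · simp [hy]
        · have hyR : ‖y‖ ≤ R := (hrsupp y hy).le
          have hx'n : ‖x'‖ ≤ ‖x‖ + 1 := by
            have hb : ‖x' - x‖ < 1 := mem_ball_iff_norm.mp hx'
            calc ‖x'‖ = ‖x + (x' - x)‖ := by rw [show x + (x' - x) = x' by abel]
              _ ≤ ‖x‖ + ‖x' - x‖ := norm_add_le _ _
              _ ≤ ‖x‖ + 1 := by linarith
          have hv : ‖y - s • x'‖ ≤ R + ‖x‖ + 1 := by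
            refine le_trans (norm_sub_le _ _) ?_
            have h2 : ‖s • x'‖ ≤ ‖x‖ + 1 := by
              rw [norm_smul, Real.norm_eq_abs, abs_of_nonneg hs0]
              nlinarith [norm_nonneg x']
            linarith
          have h12 : s / (1 - s ^ 2) * (φ s x' y * r y)
              ≤ 1 / (1 - s ^ 2) * ((2 * π * (1 - s ^ 2)) ^ (-(d : ℝ) / 2) * r y) := by
            rw [div_mul_eq_mul_div, div_mul_eq_mul_div, div_le_div_iff₀ hσ hσ]
            have hXle := mul_le_mul_of_nonneg_right (hφle x' y) (hr0 y)
            have hX0 : 0 ≤ φ s x' y * r y := mul_nonneg (hφpos x' y).le (hr0 y)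
            nlinarith [mul_nonneg (mul_nonneg (sub_nonneg.mpr hs1.le) hX0) hσ.le,
              mul_le_mul_of_nonneg_right hXle hσ.le]
          calc s / (1 - s ^ 2) * (φ s x' y * r y) * ‖y - s • x'‖
              ≤ 1 / (1 - s ^ 2) * ((2 * π * (1 - s ^ 2)) ^ (-(d : ℝ) / 2) * r y)
                * (R + ‖x‖ + 1) :=
                mul_le_mul h12 hv (norm_nonneg _)
                  (mul_nonneg (one_div_nonneg.mpr hσ.le) (mul_nonneg hcφ.le (hr0 y)))
            _ = 1 / (1 - s ^ 2) * (2 * π * (1 - s ^ 2)) ^ (-(d : ℝ) / 2)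
                * (R + ‖x‖ + 1) * r y := by ring
      · exact hr_int.const_mul _
      · refine ae_of_all _ fun y x' hx' => ?_
        simpa only [hφ] using aux_gauss_hasFDerivAt s (1 - s ^ 2) hσ.ne'
          ((2 * π * (1 - s ^ 2)) ^ (-(d : ℝ) / 2)) (r y) y x'
    -- derivative of the numerator
    have hN' : HasFDerivAt (fun x' => ∫ y, (φ s x' y * r y) • y)
        (∫ y, ((s / (1 - s ^ 2)) * (φ s x y * r y)) •
          ((innerSL ℝ (y - s • x)).smulRight y)) x := by
      apply hasFDerivAt_integral_of_dominated_of_fderiv_le (s := Metric.ball x 1)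
        (F' := fun x' y => ((s / (1 - s ^ 2)) * (φ s x' y * r y)) •
          ((innerSL ℝ (y - s • x')).smulRight y))
        (bound := fun y => ((1 / (1 - s ^ 2)) * (2 * π * (1 - s ^ 2)) ^ (-(d : ℝ) / 2)
          * (R + ‖x‖ + 1) * R) * r y) (Metric.ball_mem_nhds x one_pos)
      · exact Filter.Eventually.of_forall fun x' =>
          (((hφcont x').aestronglyMeasurable.mul hr_meas).smul aestronglyMeasurable_id)
      · exact hint2 x
      · have heqf : (fun y => ((s / (1 - s ^ 2)) * (φ s x y * r y)) •
              ((innerSL ℝ (y - s • x)).smulRight y))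
            = fun y => r y • (((s / (1 - s ^ 2)) * φ s x y) •
              ((innerSL ℝ (y - s • x)).smulRight y)) := by
          funext y; rw [smul_smul]; congr 1; ring
        rw [heqf]
        refine hr_meas.smul (Continuous.aestronglyMeasurable ?_)
        refine Continuous.smul (continuous_const.mul (hφcont x)) ?_
        have h1 : Continuous (fun y : EuclideanSpace ℝ (Fin d) => innerSL ℝ (y - s • x)) :=
          (innerSL ℝ).continuous.comp (continuous_id.sub continuous_const)
        exact (ContinuousLinearMap.smulRightL ℝ (EuclideanSpace ℝ (Fin d))
          (EuclideanSpace ℝ (Fin d))).continuous₂.comp (h1.prodMk continuous_id)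
      · refine ae_of_all _ fun y x' hx' => ?_
        rw [norm_smul ((s / (1 - s ^ 2)) * (φ s x' y * r y))
            ((innerSL ℝ (y - s • x')).smulRight y),
          ContinuousLinearMap.norm_smulRight_apply, innerSL_apply_norm (𝕜 := ℝ),
          Real.norm_eq_abs,
          abs_of_nonneg (mul_nonneg (div_nonneg hs0 hσ.le)
            (mul_nonneg (hφpos x' y).le (hr0 y)))]
        by_cases hy : r y = 0
        · simp [hy]
        · have hyR : ‖y‖ ≤ R := (hrsupp y hy).le
          have hx'n : ‖x'‖ ≤ ‖x‖ + 1 := by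
            have hb : ‖x' - x‖ < 1 := mem_ball_iff_norm.mp hx'
            calc ‖x'‖ = ‖x + (x' - x)‖ := by rw [show x + (x' - x) = x' by abel]
              _ ≤ ‖x‖ + ‖x' - x‖ := norm_add_le _ _
              _ ≤ ‖x‖ + 1 := by linarith
          have hv : ‖y - s • x'‖ ≤ R + ‖x‖ + 1 := by
            refine le_trans (norm_sub_le _ _) ?_
            have h2 : ‖s • x'‖ ≤ ‖x‖ + 1 := by
              rw [norm_smul, Real.norm_eq_abs, abs_of_nonneg hs0]
              nlinarith [norm_nonneg x']
            linarith
          have h12 : s / (1 - s ^ 2) * (φ s x' y * r y)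
              ≤ 1 / (1 - s ^ 2) * ((2 * π * (1 - s ^ 2)) ^ (-(d : ℝ) / 2) * r y) := by
            rw [div_mul_eq_mul_div, div_mul_eq_mul_div, div_le_div_iff₀ hσ hσ]
            have hXle := mul_le_mul_of_nonneg_right (hφle x' y) (hr0 y)
            have hX0 : 0 ≤ φ s x' y * r y := mul_nonneg (hφpos x' y).le (hr0 y)
            nlinarith [mul_nonneg (mul_nonneg (sub_nonneg.mpr hs1.le) hX0) hσ.le,
              mul_le_mul_of_nonneg_right hXle hσ.le]
          calc s / (1 - s ^ 2) * (φ s x' y * r y) * (‖y - s • x'‖ * ‖y‖)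
              ≤ 1 / (1 - s ^ 2) * ((2 * π * (1 - s ^ 2)) ^ (-(d : ℝ) / 2) * r y)
                * ((R + ‖x‖ + 1) * R) := by
                refine mul_le_mul h12 ?_ (mul_nonneg (norm_nonneg _) (norm_nonneg _))
                  (mul_nonneg (one_div_nonneg.mpr hσ.le) (mul_nonneg hcφ.le (hr0 y)))
                exact mul_le_mul hv hyR (norm_nonneg _) (by positivity)
            _ = 1 / (1 - s ^ 2) * (2 * π * (1 - s ^ 2)) ^ (-(d : ℝ) / 2)
                * (R + ‖x‖ + 1) * R * r y := by ring
      · exact hr_int.const_mul _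
      · refine ae_of_all _ fun y x' hx' => ?_
        simpa only [hφ] using aux_gauss_hasFDerivAt_smul s (1 - s ^ 2) hσ.ne'
          ((2 * π * (1 - s ^ 2)) ^ (-(d : ℝ) / 2)) (r y) y x'
    -- assemble the derivative of V s
    have hQs' : HasFDerivAt (Q s)
        (∫ y, ((s / (1 - s ^ 2)) * (φ s x y * r y)) • innerSL ℝ (y - s • x)) x := by
      have hQfun : Q s = fun x' => ∫ y, φ s x' y * r y := funext (hQ s)
      rw [hQfun]; exact hQ'
    have hinv : HasFDerivAt (fun x' => (Q s x')⁻¹)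
        ((-(Q s x ^ 2)⁻¹) •
          ∫ y, ((s / (1 - s ^ 2)) * (φ s x y * r y)) • innerSL ℝ (y - s • x)) x := by
      have := (hasDerivAt_inv (hQx x).ne').comp_hasFDerivAt x hQs'
      simpa [Function.comp_def] using this
    have hprod := hinv.smul hN'
    have hlin : HasFDerivAt (fun x' : EuclideanSpace ℝ (Fin d) => s • x')
        (s • ContinuousLinearMap.id ℝ (EuclideanSpace ℝ (Fin d))) x :=
      (hasFDerivAt_id x).const_smul s
    have hW := (hprod.sub hlin).const_smul (1 / (1 - s ^ 2))
    rw [hVfun, (show HasFDerivAt (fun x' => (1 / (1 - s ^ 2)) •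
        ((Q s x')⁻¹ • (∫ y, (φ s x' y * r y) • y) - s • x')) _ x from hW).fderiv]
    -- integrability of the linear-map-valued integrands at x
    have hxball : x ∈ Metric.ball x 1 := Metric.mem_ball_self one_pos
    have hL1int : Integrable (fun y =>
        ((s / (1 - s ^ 2)) * (φ s x y * r y)) • innerSL ℝ (y - s • x)) := by
      refine (hr_int.const_mul ((1 / (1 - s ^ 2)) * (2 * π * (1 - s ^ 2)) ^ (-(d : ℝ) / 2)
          * (R + ‖x‖))).mono' ?_ (ae_of_all _ fun y => ?_)
      · have heqf : (fun y => ((s / (1 - s ^ 2)) * (φ s x y * r y)) • innerSL ℝ (y - s • x))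
            = fun y => r y • (((s / (1 - s ^ 2)) * φ s x y) • innerSL ℝ (y - s • x)) := by
          funext y; rw [smul_smul]; congr 1; ring
        rw [heqf]
        exact hr_meas.smul (Continuous.aestronglyMeasurable
          (Continuous.smul (continuous_const.mul (hφcont x))
            ((innerSL ℝ).continuous.comp (continuous_id.sub continuous_const))))
      · rw [norm_smul (s / (1 - s ^ 2) * (φ s x y * r y)) (innerSL ℝ (y - s • x)),
          innerSL_apply_norm (𝕜 := ℝ), Real.norm_eq_abs,
          abs_of_nonneg (mul_nonneg (div_nonneg hs0 hσ.le)
            (mul_nonneg (hφpos x y).le (hr0 y)))]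
        by_cases hy : r y = 0
        · simp [hy]
        · have hyR : ‖y‖ ≤ R := (hrsupp y hy).le
          have hv : ‖y - s • x‖ ≤ R + ‖x‖ := by
            refine le_trans (norm_sub_le _ _) ?_
            have h2 : ‖s • x‖ ≤ ‖x‖ := by
              rw [norm_smul, Real.norm_eq_abs, abs_of_nonneg hs0]
              nlinarith [norm_nonneg x]
            linarith
          have h12 : s / (1 - s ^ 2) * (φ s x y * r y)
              ≤ 1 / (1 - s ^ 2) * ((2 * π * (1 - s ^ 2)) ^ (-(d : ℝ) / 2) * r y) := by
            rw [div_mul_eq_mul_div, div_mul_eq_mul_div, div_le_div_iff₀ hσ hσ]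
            have hXle := mul_le_mul_of_nonneg_right (hφle x y) (hr0 y)
            have hX0 : 0 ≤ φ s x y * r y := mul_nonneg (hφpos x y).le (hr0 y)
            nlinarith [mul_nonneg (mul_nonneg (sub_nonneg.mpr hs1.le) hX0) hσ.le,
              mul_le_mul_of_nonneg_right hXle hσ.le]
          calc s / (1 - s ^ 2) * (φ s x y * r y) * ‖y - s • x‖
              ≤ 1 / (1 - s ^ 2) * ((2 * π * (1 - s ^ 2)) ^ (-(d : ℝ) / 2) * r y)
                * (R + ‖x‖) :=
                mul_le_mul h12 hv (norm_nonneg _)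
                  (mul_nonneg (one_div_nonneg.mpr hσ.le) (mul_nonneg hcφ.le (hr0 y)))
            _ = 1 / (1 - s ^ 2) * (2 * π * (1 - s ^ 2)) ^ (-(d : ℝ) / 2)
                * (R + ‖x‖) * r y := by ring
    have hL2int : Integrable (fun y =>
        ((s / (1 - s ^ 2)) * (φ s x y * r y)) • ((innerSL ℝ (y - s • x)).smulRight y)) := by
      refine (hr_int.const_mul ((1 / (1 - s ^ 2)) * (2 * π * (1 - s ^ 2)) ^ (-(d : ℝ) / 2)
          * (R + ‖x‖) * R)).mono' ?_ (ae_of_all _ fun y => ?_)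
      · have heqf : (fun y => ((s / (1 - s ^ 2)) * (φ s x y * r y)) •
              ((innerSL ℝ (y - s • x)).smulRight y))
            = fun y => r y • (((s / (1 - s ^ 2)) * φ s x y) •
              ((innerSL ℝ (y - s • x)).smulRight y)) := by
          funext y; rw [smul_smul]; congr 1; ring
        rw [heqf]
        refine hr_meas.smul (Continuous.aestronglyMeasurable ?_)
        refine Continuous.smul (continuous_const.mul (hφcont x)) ?_
        have h1 : Continuous (fun y : EuclideanSpace ℝ (Fin d) => innerSL ℝ (y - s • x)) :=
          (innerSL ℝ).continuous.comp (continuous_id.sub continuous_const)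
        exact (ContinuousLinearMap.smulRightL ℝ (EuclideanSpace ℝ (Fin d))
          (EuclideanSpace ℝ (Fin d))).continuous₂.comp (h1.prodMk continuous_id)
      · rw [norm_smul ((s / (1 - s ^ 2)) * (φ s x y * r y))
            ((innerSL ℝ (y - s • x)).smulRight y),
          ContinuousLinearMap.norm_smulRight_apply, innerSL_apply_norm (𝕜 := ℝ),
          Real.norm_eq_abs,
          abs_of_nonneg (mul_nonneg (div_nonneg hs0 hσ.le)
            (mul_nonneg (hφpos x y).le (hr0 y)))]
        by_cases hy : r y = 0
        · simp [hy]
        · have hyR : ‖y‖ ≤ R := (hrsupp y hy).le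
          have hv : ‖y - s • x‖ ≤ R + ‖x‖ := by
            refine le_trans (norm_sub_le _ _) ?_
            have h2 : ‖s • x‖ ≤ ‖x‖ := by
              rw [norm_smul, Real.norm_eq_abs, abs_of_nonneg hs0]
              nlinarith [norm_nonneg x]
            linarith
          have h12 : s / (1 - s ^ 2) * (φ s x y * r y)
              ≤ 1 / (1 - s ^ 2) * ((2 * π * (1 - s ^ 2)) ^ (-(d : ℝ) / 2) * r y) := by
            rw [div_mul_eq_mul_div, div_mul_eq_mul_div, div_le_div_iff₀ hσ hσ]
            have hXle := mul_le_mul_of_nonneg_right (hφle x y) (hr0 y)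
            have hX0 : 0 ≤ φ s x y * r y := mul_nonneg (hφpos x y).le (hr0 y)
            nlinarith [mul_nonneg (mul_nonneg (sub_nonneg.mpr hs1.le) hX0) hσ.le,
              mul_le_mul_of_nonneg_right hXle hσ.le]
          calc s / (1 - s ^ 2) * (φ s x y * r y) * (‖y - s • x‖ * ‖y‖)
              ≤ 1 / (1 - s ^ 2) * ((2 * π * (1 - s ^ 2)) ^ (-(d : ℝ) / 2) * r y)
                * ((R + ‖x‖) * R) := by
                refine mul_le_mul h12 ?_ (mul_nonneg (norm_nonneg _) (norm_nonneg _))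
                  (mul_nonneg (one_div_nonneg.mpr hσ.le) (mul_nonneg hcφ.le (hr0 y)))
                exact mul_le_mul hv hyR (norm_nonneg _) (by positivity)
            _ = 1 / (1 - s ^ 2) * (2 * π * (1 - s ^ 2)) ^ (-(d : ℝ) / 2)
                * (R + ‖x‖) * R * r y := by ring
    -- norm of the numerator integral
    have hnN : ‖∫ y, (φ s x y * r y) • y‖ ≤ R * Q s x := by
      refine le_trans (norm_integral_le_integral_norm _) ?_
      have hmono : (∫ y, ‖(φ s x y * r y) • y‖) ≤ ∫ y, R * (φ s x y * r y) := by
        refine integral_mono_of_nonneg (ae_of_all _ fun y => norm_nonneg _)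
          ((hint1 x).const_mul R) (ae_of_all _ fun y => ?_)
        dsimp only
        rw [norm_smul, Real.norm_eq_abs,
          abs_of_nonneg (mul_nonneg (hφpos x y).le (hr0 y))]
        by_cases hy : r y = 0
        · simp [hy]
        · have hyR : ‖y‖ ≤ R := (hrsupp y hy).le
          calc φ s x y * r y * ‖y‖ ≤ φ s x y * r y * R :=
              mul_le_mul_of_nonneg_left hyR (mul_nonneg (hφpos x y).le (hr0 y))
            _ = R * (φ s x y * r y) := by ring
      refine le_trans hmono ?_
      rw [integral_const_mul, ← hQ s x]
    -- the operator norm bound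
    have hD : ‖(Q s x)⁻¹ • (∫ y, ((s / (1 - s ^ 2)) * (φ s x y * r y)) •
          ((innerSL ℝ (y - s • x)).smulRight y))
        + ((-(Q s x ^ 2)⁻¹) •
            ∫ y, ((s / (1 - s ^ 2)) * (φ s x y * r y)) • innerSL ℝ (y - s • x)).smulRight
            (∫ y, (φ s x y * r y) • y)
        - s • ContinuousLinearMap.id ℝ (EuclideanSpace ℝ (Fin d))‖
        ≤ 2 * R ^ 2 / (1 - s ^ 2) + 1 := by
      refine ContinuousLinearMap.opNorm_le_bound _ ?_ fun h => ?_
      · have : 0 ≤ 2 * R ^ 2 / (1 - s ^ 2) := div_nonneg (by positivity) hσ.le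
        linarith
      · -- apply to h and rearrange
        have hinnercont : Continuous (fun y : EuclideanSpace ℝ (Fin d) => ⟪y, h⟫) :=
          continuous_id.inner continuous_const
        have hinta : Integrable (fun y => (φ s x y * r y * ⟪y, h⟫) • y) := by
          refine (hr_int.const_mul ((2 * π * (1 - s ^ 2)) ^ (-(d : ℝ) / 2)
              * (R * ‖h‖) * R)).mono'
            ((((hφcont x).aestronglyMeasurable.mul hr_meas).mul
              hinnercont.aestronglyMeasurable).smul aestronglyMeasurable_id)
            (ae_of_all _ fun y => ?_)
          rw [norm_smul, Real.norm_eq_abs, abs_mul,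
            abs_of_nonneg (mul_nonneg (hφpos x y).le (hr0 y))]
          by_cases hy : r y = 0
          · simp [hy]
          · have hyR : ‖y‖ ≤ R := (hrsupp y hy).le
            have hi : |⟪y, h⟫| ≤ R * ‖h‖ := le_trans (abs_real_inner_le_norm y h)
              (mul_le_mul_of_nonneg_right hyR (norm_nonneg h))
            calc φ s x y * r y * |⟪y, h⟫| * ‖y‖
                ≤ (2 * π * (1 - s ^ 2)) ^ (-(d : ℝ) / 2) * r y * (R * ‖h‖) * R := by
                  refine mul_le_mul ?_ hyR (norm_nonneg _)
                    (mul_nonneg (mul_nonneg hcφ.le (hr0 y)) (by positivity))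
                  exact mul_le_mul (mul_le_mul_of_nonneg_right (hφle x y) (hr0 y)) hi
                    (abs_nonneg _) (mul_nonneg hcφ.le (hr0 y))
              _ = (2 * π * (1 - s ^ 2)) ^ (-(d : ℝ) / 2) * (R * ‖h‖) * R * r y := by ring
        have hintb : Integrable (fun y => φ s x y * r y * ⟪y, h⟫) := by
          refine (hr_int.const_mul ((2 * π * (1 - s ^ 2)) ^ (-(d : ℝ) / 2)
              * (R * ‖h‖))).mono'
            (((hφcont x).aestronglyMeasurable.mul hr_meas).mul
              hinnercont.aestronglyMeasurable)
            (ae_of_all _ fun y => ?_)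
          rw [Real.norm_eq_abs, abs_mul,
            abs_of_nonneg (mul_nonneg (hφpos x y).le (hr0 y))]
          by_cases hy : r y = 0
          · simp [hy]
          · have hyR : ‖y‖ ≤ R := (hrsupp y hy).le
            have hi : |⟪y, h⟫| ≤ R * ‖h‖ := le_trans (abs_real_inner_le_norm y h)
              (mul_le_mul_of_nonneg_right hyR (norm_nonneg h))
            calc φ s x y * r y * |⟪y, h⟫|
                ≤ (2 * π * (1 - s ^ 2)) ^ (-(d : ℝ) / 2) * r y * (R * ‖h‖) :=
                  mul_le_mul (mul_le_mul_of_nonneg_right (hφle x y) (hr0 y)) hi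
                    (abs_nonneg _) (mul_nonneg hcφ.le (hr0 y))
              _ = (2 * π * (1 - s ^ 2)) ^ (-(d : ℝ) / 2) * (R * ‖h‖) * r y := by ring
        have hintc : Integrable (fun y => (s * ⟪x, h⟫) • ((φ s x y * r y) • y)) :=
          (hint2 x).smul (s * ⟪x, h⟫)
        have hintd : Integrable (fun y => (s * ⟪x, h⟫) * (φ s x y * r y)) :=
          (hint1 x).const_mul (s * ⟪x, h⟫)
        have hL2app : (∫ y, ((s / (1 - s ^ 2)) * (φ s x y * r y)) •
              ((innerSL ℝ (y - s • x)).smulRight y)) h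
            = (s / (1 - s ^ 2)) • ((∫ y, (φ s x y * r y * ⟪y, h⟫) • y)
              - (s * ⟪x, h⟫) • ∫ y, (φ s x y * r y) • y) := by
          rw [ContinuousLinearMap.integral_apply hL2int h]
          have heq : (fun y => (((s / (1 - s ^ 2)) * (φ s x y * r y)) •
                ((innerSL ℝ (y - s • x)).smulRight y)) h)
              = fun y => (s / (1 - s ^ 2)) • ((φ s x y * r y * ⟪y, h⟫) • y
                - (s * ⟪x, h⟫) • ((φ s x y * r y) • y)) := by
            funext y
            simp only [ContinuousLinearMap.smul_apply, ContinuousLinearMap.smulRight_apply,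
              innerSL_apply_apply]
            rw [inner_sub_left, real_inner_smul_left]
            match_scalars
            ring
          rw [heq, integral_smul, integral_sub hinta hintc, integral_smul]
        have hL1app : (∫ y, ((s / (1 - s ^ 2)) * (φ s x y * r y)) •
              innerSL ℝ (y - s • x)) h
            = (s / (1 - s ^ 2)) * ((∫ y, φ s x y * r y * ⟪y, h⟫)
              - (s * ⟪x, h⟫) * Q s x) := by
          rw [ContinuousLinearMap.integral_apply hL1int h]
          have heq : (fun y => (((s / (1 - s ^ 2)) * (φ s x y * r y)) •
                innerSL ℝ (y - s • x)) h)
              = fun y => (s / (1 - s ^ 2)) * ((φ s x y * r y * ⟪y, h⟫)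
                - (s * ⟪x, h⟫) * (φ s x y * r y)) := by
            funext y
            simp only [ContinuousLinearMap.smul_apply, innerSL_apply_apply, smul_eq_mul]
            rw [inner_sub_left, real_inner_smul_left]
            ring
          rw [heq, integral_const_mul, integral_sub hintb hintd, integral_const_mul,
            ← hQ s x]
        -- norms of the component integrals
        have hna : ‖∫ y, (φ s x y * r y * ⟪y, h⟫) • y‖ ≤ R ^ 2 * ‖h‖ * Q s x := by
          refine le_trans (norm_integral_le_integral_norm _) ?_
          have hmono : (∫ y, ‖(φ s x y * r y * ⟪y, h⟫) • y‖)
              ≤ ∫ y, (R ^ 2 * ‖h‖) * (φ s x y * r y) := by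
            refine integral_mono_of_nonneg (ae_of_all _ fun y => norm_nonneg _)
              ((hint1 x).const_mul _) (ae_of_all _ fun y => ?_)
            dsimp only
            rw [norm_smul, Real.norm_eq_abs, abs_mul,
              abs_of_nonneg (mul_nonneg (hφpos x y).le (hr0 y))]
            by_cases hy : r y = 0
            · simp [hy]
            · have hyR : ‖y‖ ≤ R := (hrsupp y hy).le
              have hi : |⟪y, h⟫| ≤ R * ‖h‖ := le_trans (abs_real_inner_le_norm y h)
                (mul_le_mul_of_nonneg_right hyR (norm_nonneg h))
              have hX0 : 0 ≤ φ s x y * r y := mul_nonneg (hφpos x y).le (hr0 y)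
              calc φ s x y * r y * |⟪y, h⟫| * ‖y‖
                  ≤ φ s x y * r y * (R * ‖h‖) * R := by
                    refine mul_le_mul ?_ hyR (norm_nonneg _)
                      (mul_nonneg hX0 (by positivity))
                    exact mul_le_mul_of_nonneg_left hi hX0
                _ = (R ^ 2 * ‖h‖) * (φ s x y * r y) := by ring
          refine le_trans hmono ?_
          rw [integral_const_mul, ← hQ s x]
        have hnb : |∫ y, φ s x y * r y * ⟪y, h⟫| ≤ R * ‖h‖ * Q s x := by
          rw [← Real.norm_eq_abs]
          refine le_trans (norm_integral_le_integral_norm _) ?_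
          have hmono : (∫ y, ‖φ s x y * r y * ⟪y, h⟫‖)
              ≤ ∫ y, (R * ‖h‖) * (φ s x y * r y) := by
            refine integral_mono_of_nonneg (ae_of_all _ fun y => norm_nonneg _)
              ((hint1 x).const_mul _) (ae_of_all _ fun y => ?_)
            dsimp only
            rw [Real.norm_eq_abs, abs_mul,
              abs_of_nonneg (mul_nonneg (hφpos x y).le (hr0 y))]
            by_cases hy : r y = 0
            · simp [hy]
            · have hyR : ‖y‖ ≤ R := (hrsupp y hy).le
              have hi : |⟪y, h⟫| ≤ R * ‖h‖ := le_trans (abs_real_inner_le_norm y h)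
                (mul_le_mul_of_nonneg_right hyR (norm_nonneg h))
              have hX0 : 0 ≤ φ s x y * r y := mul_nonneg (hφpos x y).le (hr0 y)
              calc φ s x y * r y * |⟪y, h⟫| ≤ φ s x y * r y * (R * ‖h‖) :=
                  mul_le_mul_of_nonneg_left hi hX0
                _ = (R * ‖h‖) * (φ s x y * r y) := by ring
          refine le_trans hmono ?_
          rw [integral_const_mul, ← hQ s x]
        -- rearrange the applied derivative
        have happly : ((Q s x)⁻¹ • (∫ y, ((s / (1 - s ^ 2)) * (φ s x y * r y)) •
              ((innerSL ℝ (y - s • x)).smulRight y))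
            + ((-(Q s x ^ 2)⁻¹) •
                ∫ y, ((s / (1 - s ^ 2)) * (φ s x y * r y)) • innerSL ℝ (y - s • x)).smulRight
                (∫ y, (φ s x y * r y) • y)
            - s • ContinuousLinearMap.id ℝ (EuclideanSpace ℝ (Fin d))) h
            = (s / (1 - s ^ 2)) • ((Q s x)⁻¹ • (∫ y, (φ s x y * r y * ⟪y, h⟫) • y)
              - ((Q s x ^ 2)⁻¹ * (∫ y, φ s x y * r y * ⟪y, h⟫)) •
                (∫ y, (φ s x y * r y) • y))
              - s • h := by
          simp only [ContinuousLinearMap.sub_apply, ContinuousLinearMap.add_apply,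
            ContinuousLinearMap.coe_smul', Pi.smul_apply,
            ContinuousLinearMap.smulRight_apply, ContinuousLinearMap.coe_id', id_eq]
          rw [hL2app, hL1app]
          have hQne : Q s x ≠ 0 := (hQx x).ne'
          match_scalars
          all_goals try field_simp [smul_eq_mul]
          all_goals try ring
          all_goals try exact Or.inl trivial
          all_goals try exact Or.inl (by ring)
          all_goals field_simp [hσ.ne']
          all_goals ring
        rw [happly]
        have h1 : ‖(Q s x)⁻¹ • (∫ y, (φ s x y * r y * ⟪y, h⟫) • y)‖ ≤ R ^ 2 * ‖h‖ := by
          rw [norm_smul, norm_inv, Real.norm_eq_abs, abs_of_pos (hQx x)]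
          calc (Q s x)⁻¹ * ‖∫ y, (φ s x y * r y * ⟪y, h⟫) • y‖
              ≤ (Q s x)⁻¹ * (R ^ 2 * ‖h‖ * Q s x) :=
                mul_le_mul_of_nonneg_left hna (inv_nonneg.mpr (hQx x).le)
            _ = R ^ 2 * ‖h‖ := by field_simp [(hQx x).ne']
        have h2 : ‖((Q s x ^ 2)⁻¹ * (∫ y, φ s x y * r y * ⟪y, h⟫)) •
              (∫ y, (φ s x y * r y) • y)‖ ≤ R ^ 2 * ‖h‖ := by
          rw [norm_smul, Real.norm_eq_abs, abs_mul,
            abs_of_pos (inv_pos.mpr (pow_pos (hQx x) 2))]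
          calc (Q s x ^ 2)⁻¹ * |∫ y, φ s x y * r y * ⟪y, h⟫|
                * ‖∫ y, (φ s x y * r y) • y‖
              ≤ (Q s x ^ 2)⁻¹ * (R * ‖h‖ * Q s x) * (R * Q s x) := by
                refine mul_le_mul
                  (mul_le_mul_of_nonneg_left hnb (inv_nonneg.mpr (pow_pos (hQx x) 2).le))
                  hnN (norm_nonneg _) ?_
                exact mul_nonneg (inv_nonneg.mpr (pow_pos (hQx x) 2).le)
                  (mul_nonneg (mul_nonneg hR.le (norm_nonneg h)) (hQx x).le)
            _ = R ^ 2 * ‖h‖ := by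
                field_simp [(hQx x).ne']
        have hz : ‖(Q s x)⁻¹ • (∫ y, (φ s x y * r y * ⟪y, h⟫) • y)
              - ((Q s x ^ 2)⁻¹ * (∫ y, φ s x y * r y * ⟪y, h⟫)) •
                (∫ y, (φ s x y * r y) • y)‖ ≤ R ^ 2 * ‖h‖ + R ^ 2 * ‖h‖ :=
          (norm_sub_le _ _).trans (add_le_add h1 h2)
        calc ‖(s / (1 - s ^ 2)) • ((Q s x)⁻¹ • (∫ y, (φ s x y * r y * ⟪y, h⟫) • y)
              - ((Q s x ^ 2)⁻¹ * (∫ y, φ s x y * r y * ⟪y, h⟫)) •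
                (∫ y, (φ s x y * r y) • y)) - s • h‖
            ≤ ‖(s / (1 - s ^ 2)) • ((Q s x)⁻¹ • (∫ y, (φ s x y * r y * ⟪y, h⟫) • y)
              - ((Q s x ^ 2)⁻¹ * (∫ y, φ s x y * r y * ⟪y, h⟫)) •
                (∫ y, (φ s x y * r y) • y))‖ + ‖s • h‖ := norm_sub_le _ _
          _ ≤ 2 * R ^ 2 / (1 - s ^ 2) * ‖h‖ + 1 * ‖h‖ := by
              refine add_le_add ?_ ?_
              · rw [norm_smul, Real.norm_eq_abs, abs_of_nonneg (div_nonneg hs0 hσ.le)]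
                calc s / (1 - s ^ 2) * ‖(Q s x)⁻¹ • (∫ y, (φ s x y * r y * ⟪y, h⟫) • y)
                      - ((Q s x ^ 2)⁻¹ * (∫ y, φ s x y * r y * ⟪y, h⟫)) •
                        (∫ y, (φ s x y * r y) • y)‖
                    ≤ 1 / (1 - s ^ 2) * (R ^ 2 * ‖h‖ + R ^ 2 * ‖h‖) :=
                      mul_le_mul ((div_le_div_iff_of_pos_right hσ).mpr hs1.le) hz (norm_nonneg _)
                        (one_div_nonneg.mpr hσ.le)
                  _ = 2 * R ^ 2 / (1 - s ^ 2) * ‖h‖ := by ring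
              · rw [norm_smul, Real.norm_eq_abs, abs_of_nonneg hs0]
                exact mul_le_mul_of_nonneg_right hs1.le (norm_nonneg h)
          _ = (2 * R ^ 2 / (1 - s ^ 2) + 1) * ‖h‖ := by ring
    -- conclude
    rw [norm_smul (1 / (1 - s ^ 2)) _, Real.norm_eq_abs,
      abs_of_pos (by positivity : (0:ℝ) < 1 / (1 - s ^ 2))]
    have hfin : 1 / (1 - s ^ 2) * (2 * R ^ 2 / (1 - s ^ 2) + 1)
        ≤ (2 * R ^ 2 + 1) / (1 - t ^ 2) ^ 2 := by
      have e : 1 / (1 - s ^ 2) * (2 * R ^ 2 / (1 - s ^ 2) + 1)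
          = (2 * R ^ 2 + (1 - s ^ 2)) / (1 - s ^ 2) ^ 2 := by
        field_simp
        all_goals try ring
        all_goals try exact Or.inl trivial
      rw [e, div_le_div_iff₀ (pow_pos hσ 2) (pow_pos h1t 2)]
      have huv2 : (1 - t ^ 2) ^ 2 ≤ (1 - s ^ 2) ^ 2 := pow_le_pow_left₀ h1t.le hσt 2
      have hu1 : 1 - t ^ 2 ≤ 1 := by nlinarith
      have hu2v : (1 - t ^ 2) ^ 2 ≤ 1 - s ^ 2 := by nlinarith
      nlinarith [mul_nonneg (sq_nonneg R) (sub_nonneg.mpr huv2),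
        mul_le_mul_of_nonneg_left hu2v hσ.le]
    exact le_trans (mul_le_mul_of_nonneg_left hD (one_div_nonneg.mpr hσ.le)) hfin
end
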